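/- arXiv:1701.00808 — 5 statements merged into one kernel-verified Lean document; each statement's English description precedes it below -/
import Mathlib

section
/- Let n ≥ 2 and let L be a generalized Legendre polynomial of degree n−1. Define φ(ξ) = ∫_{−1}^{ξ} w(t) L(t) dt for ξ ∈ [−1,1]. Then φ is continuous on [−1,1] with φ(−1) = φ(1) = 0; the restrictions of φ to [−1,α̂] and to [α̂,1] are infinitely differentiable with β̂ φ⁽ʲ⁾ = L⁽ʲ⁻¹⁾ on each of (−1,α̂) and (α̂,1) for every j ≥ 1; and consequently the jump conditions β⁻ φ⁽ʲ⁾(α̂⁻) = β⁺ φ⁽ʲ⁾(α̂⁺) hold for every j = 1, …, n. -/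
open Set

/-- The piecewise-constant diffusion coefficient on the reference interval. -/
noncomputable def betah (βm βp αh : ℝ) : ℝ → ℝ := fun ξ => if ξ < αh then βm else βp

open MeasureTheory

private lemma contDiff_polyeval (p : Polynomial ℝ) :
    ContDiff ℝ (⊤ : ℕ∞) fun x : ℝ => p.eval x := by
  induction p using Polynomial.induction_on' with
  | add p q hp hq => simpa using hp.add hq
  | monomial n a =>
      simpa [Polynomial.eval_monomial] using contDiff_const.mul (contDiff_id.pow n)

private lemma iterDeriv_const_mul_polyeval (c : ℝ) (p : Polynomial ℝ) (k : ℕ) :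
    iteratedDeriv k (fun x : ℝ => c * p.eval x)
      = fun x => c * ((⇑Polynomial.derivative)^[k] p).eval x := by
  induction k generalizing p with
  | zero => simp
  | succ k ih =>
    rw [iteratedDeriv_succ']
    have hd : deriv (fun x : ℝ => c * p.eval x) = fun x => c * p.derivative.eval x := by
      funext x
      rw [deriv_const_mul _ p.differentiableAt, Polynomial.deriv]
    rw [hd, ih p.derivative, Function.iterate_succ_apply]

private lemma iterDerivWithin_eq_iterDeriv (f : ℝ → ℝ) (hf : ContDiff ℝ (⊤ : ℕ∞) f)
    {s : Set ℝ} (hs : UniqueDiffOn ℝ s) (j : ℕ) :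
    ∀ x ∈ s, iteratedDerivWithin j f s x = iteratedDeriv j f x := by
  induction j with
  | zero => intro x _; simp
  | succ j ih =>
    intro x hx
    rw [iteratedDerivWithin_succ, iteratedDeriv_succ,
      derivWithin_congr (fun y hy => ih y hy) (ih x hx)]
    refine DifferentiableAt.derivWithin ?_ (hs.uniqueDiffWithinAt hx)
    have h2 : ContDiff ℝ (⊤ : ℕ∞) (deriv^[j] f) := ContDiff.iterate_deriv j hf
    rw [iteratedDeriv_eq_iterate]
    exact (h2.differentiable (by simp)).differentiableAt

private lemma aux_iter (F : ℝ → ℝ) (L : Polynomial ℝ) (hF : ∀ x, HasDerivAt F (L.eval x) x)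
    (c d : ℝ) (k : ℕ) :
    iteratedDeriv (k + 1) (fun x => c * F x + d)
      = fun x => c * ((⇑Polynomial.derivative)^[k] L).eval x := by
  rw [iteratedDeriv_succ']
  have hd : deriv (fun x => c * F x + d) = fun x => c * L.eval x :=
    funext fun x => (((hF x).const_mul c).add_const d).deriv
  rw [hd, iterDeriv_const_mul_polyeval]

/-- the generalized Lobatto polynomial
`φ(ξ) = ∫_{−1}^{ξ} w(t) L(t) dt` of degree `n ≥ 2` (where `L` is a generalized Legendre
polynomial of degree `n−1` for the weight `w = 1/β̂`) is continuous with `φ(−1) = φ(1) = 0`,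
its restrictions to the two sub-intervals are infinitely differentiable with
`β̂ φ⁽ʲ⁾ = L⁽ʲ⁻¹⁾` there, and it satisfies the jump conditions
`β⁻ φ⁽ʲ⁾(α̂⁻) = β⁺ φ⁽ʲ⁾(α̂⁺)` for `j = 1,…,n`. -/
theorem stmt_2 (n : ℕ) (hn : 2 ≤ n) (βm βp αh : ℝ) (hβm : 0 < βm) (hβp : 0 < βp)
    (hα₁ : -1 < αh) (hα₂ : αh < 1)
    (L : Polynomial ℝ) (hLdeg : L.degree = ((n - 1 : ℕ) : WithBot ℕ))
    (hLorth : ∀ q : Polynomial ℝ, q.degree < ((n - 1 : ℕ) : WithBot ℕ) →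
      ∫ ξ in (-1 : ℝ)..1, L.eval ξ * q.eval ξ / betah βm βp αh ξ = 0)
    (φ : ℝ → ℝ) (hφ : ∀ ξ, φ ξ = ∫ t in (-1 : ℝ)..ξ, L.eval t / betah βm βp αh t) :
    ContinuousOn φ (Icc (-1) 1) ∧ φ (-1) = 0 ∧ φ 1 = 0 ∧
    ContDiffOn ℝ (⊤ : ℕ∞) φ (Icc (-1) αh) ∧ ContDiffOn ℝ (⊤ : ℕ∞) φ (Icc αh 1) ∧
    (∀ j : ℕ, 1 ≤ j →
      (∀ ξ ∈ Ioo (-1 : ℝ) αh,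
        βm * iteratedDeriv j φ ξ = ((⇑Polynomial.derivative)^[j - 1] L).eval ξ) ∧
      (∀ ξ ∈ Ioo αh (1 : ℝ),
        βp * iteratedDeriv j φ ξ = ((⇑Polynomial.derivative)^[j - 1] L).eval ξ)) ∧
    (∀ j : ℕ, 1 ≤ j → j ≤ n →
      βm * iteratedDerivWithin j φ (Icc (-1) αh) αh
        = βp * iteratedDerivWithin j φ (Icc αh 1) αh) := by
  have hLc : Continuous fun x : ℝ => L.eval x := L.continuous
  set F : ℝ → ℝ := fun x => ∫ t in (-1 : ℝ)..x, L.eval t with hFdef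
  have hFd : ∀ x : ℝ, HasDerivAt F (L.eval x) x := fun x =>
    intervalIntegral.integral_hasDerivAt_right (hLc.intervalIntegrable _ _)
      (hLc.stronglyMeasurableAtFilter _ _) hLc.continuousAt
  have hFsm : ContDiff ℝ (⊤ : ℕ∞) F := by
    rw [contDiff_infty_iff_deriv]
    have hd : deriv F = fun x => L.eval x := funext fun x => (hFd x).deriv
    exact ⟨fun x => (hFd x).differentiableAt, hd ▸ contDiff_polyeval L⟩
  have hαae : ∀ᵐ t : ℝ, t ≠ αh := by
    rw [MeasureTheory.ae_iff]
    simp only [ne_eq, not_not, Set.setOf_eq_eq_singleton]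
    exact Real.volume_singleton
  -- φ on the left of αh
  have hA : ∀ ξ : ℝ, ξ ≤ αh → φ ξ = βm⁻¹ * F ξ + 0 := by
    intro ξ hξ
    rw [hφ]
    have hcongr : ∫ t in (-1 : ℝ)..ξ, L.eval t / betah βm βp αh t
        = ∫ t in (-1 : ℝ)..ξ, L.eval t / βm := by
      apply intervalIntegral.integral_congr_ae
      filter_upwards [hαae] with t ht htI
      have h1 : t < αh := by
        rcases Set.mem_uIoc.mp htI with h | h
        · exact lt_of_le_of_ne (h.2.trans hξ) ht
        · exact lt_of_le_of_ne (h.2.trans hα₁.le) ht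
      simp [betah, h1]
    rw [hcongr, intervalIntegral.integral_div]
    ring
  -- integrability pieces
  have hI1 : IntervalIntegrable (fun t => L.eval t / betah βm βp αh t) volume (-1) αh := by
    refine ((hLc.div_const βm).intervalIntegrable _ _).congr_ae ?_
    refine (ae_restrict_iff' measurableSet_uIoc).mpr ?_
    filter_upwards [hαae] with t ht htI
    have h1 : t < αh := by
      rcases Set.mem_uIoc.mp htI with h | h
      · exact lt_of_le_of_ne h.2 ht
      · exact absurd (h.1.trans_le h.2) (asymm hα₁)
    simp [betah, h1]
  have hI2 : ∀ b : ℝ, αh ≤ b →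
      IntervalIntegrable (fun t => L.eval t / betah βm βp αh t) volume αh b := by
    intro b hb
    refine ((hLc.div_const βp).intervalIntegrable _ _).congr_ae ?_
    refine (ae_restrict_iff' measurableSet_uIoc).mpr ?_
    filter_upwards with t htI
    have h1 : ¬ t < αh := by
      rcases Set.mem_uIoc.mp htI with h | h
      · exact not_lt.mpr h.1.le
      · exact absurd (h.1.trans_le h.2) (not_lt.mpr hb)
    simp [betah, h1]
  -- φ on the right of αh
  have hB : ∀ ξ : ℝ, αh ≤ ξ → φ ξ = βp⁻¹ * F ξ + (βm⁻¹ * F αh - βp⁻¹ * F αh) := by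
    intro ξ hξ
    rw [hφ, ← intervalIntegral.integral_add_adjacent_intervals hI1 (hI2 ξ hξ)]
    have e1 : ∫ t in (-1 : ℝ)..αh, L.eval t / betah βm βp αh t = βm⁻¹ * F αh := by
      have h := hA αh le_rfl
      rwa [hφ, add_zero] at h
    have e2 : ∫ t in αh..ξ, L.eval t / betah βm βp αh t = βp⁻¹ * (F ξ - F αh) := by
      have hcongr : ∫ t in αh..ξ, L.eval t / betah βm βp αh t
          = ∫ t in αh..ξ, L.eval t / βp := by
        apply intervalIntegral.integral_congr_ae
        filter_upwards with t htI
        have h1 : ¬ t < αh := by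
          rcases Set.mem_uIoc.mp htI with h | h
          · exact not_lt.mpr h.1.le
          · exact absurd (h.1.trans_le h.2) (not_lt.mpr hξ)
        simp [betah, h1]
      have hsub : F ξ - F αh = ∫ t in αh..ξ, L.eval t :=
        intervalIntegral.integral_interval_sub_left (hLc.intervalIntegrable _ _)
          (hLc.intervalIntegrable _ _)
      rw [hcongr, intervalIntegral.integral_div, ← hsub]
      ring
    rw [e1, e2]
    ring
  have hg1 : ContDiff ℝ (⊤ : ℕ∞) (fun x => βm⁻¹ * F x + 0) :=
    (contDiff_const.mul hFsm).add contDiff_const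
  have hg2 : ContDiff ℝ (⊤ : ℕ∞) (fun x => βp⁻¹ * F x + (βm⁻¹ * F αh - βp⁻¹ * F αh)) :=
    (contDiff_const.mul hFsm).add contDiff_const
  have hcd1 : ContDiffOn ℝ (⊤ : ℕ∞) φ (Icc (-1) αh) :=
    hg1.contDiffOn.congr fun x hx => hA x hx.2
  have hcd2 : ContDiffOn ℝ (⊤ : ℕ∞) φ (Icc αh 1) :=
    hg2.contDiffOn.congr fun x hx => hB x hx.1
  have hc1 := hcd1.continuousOn
  have hc2 := hcd2.continuousOn
  refine ⟨?_, ?_, ?_, hcd1, hcd2, ?_, ?_⟩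
  · -- continuity on Icc (-1) 1
    intro x hx
    have hU : Icc (-1 : ℝ) 1 = Icc (-1) αh ∪ Icc αh 1 :=
      (Set.Icc_union_Icc_eq_Icc hα₁.le hα₂.le).symm
    rw [hU]
    by_cases h : x ≤ αh
    · refine ContinuousWithinAt.union (hc1 x ⟨hx.1, h⟩) ?_
      rcases eq_or_lt_of_le h with rfl | hlt
      · exact hc2 x ⟨le_rfl, hα₂.le⟩
      · exact continuousWithinAt_of_notMem_closure
          (by rw [isClosed_Icc.closure_eq]; exact fun hm => absurd hm.1 (not_le.mpr hlt))
    · push_neg at h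
      refine ContinuousWithinAt.union ?_ (hc2 x ⟨h.le, hx.2⟩)
      exact continuousWithinAt_of_notMem_closure
        (by rw [isClosed_Icc.closure_eq]; exact fun hm => absurd hm.2 (not_le.mpr h))
  · rw [hφ, intervalIntegral.integral_same]
  · -- φ 1 = 0
    have h0 : (0 : WithBot ℕ) < ((n - 1 : ℕ) : WithBot ℕ) := by
      exact_mod_cast (show 0 < n - 1 by omega)
    have h1 := hLorth 1 (by rw [Polynomial.degree_one]; exact h0)
    rw [hφ]
    simpa using h1
  · -- interior derivative identities
    intro j hj
    obtain ⟨k, rfl⟩ : ∃ k, j = k + 1 := ⟨j - 1, (Nat.succ_pred_eq_of_pos hj).symm⟩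
    constructor
    · intro ξ hξ
      have hev : φ =ᶠ[nhds ξ] fun x => βm⁻¹ * F x + 0 := by
        filter_upwards [Iio_mem_nhds hξ.2] with y hy
        exact hA y (le_of_lt hy)
      rw [hev.iteratedDeriv_eq (k + 1), aux_iter F L hFd, Nat.add_sub_cancel]
      field_simp
    · intro ξ hξ
      have hev : φ =ᶠ[nhds ξ] fun x => βp⁻¹ * F x + (βm⁻¹ * F αh - βp⁻¹ * F αh) := by
        filter_upwards [Ioi_mem_nhds hξ.1] with y hy
        exact hB y (le_of_lt hy)
      rw [hev.iteratedDeriv_eq (k + 1), aux_iter F L hFd, Nat.add_sub_cancel]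
      field_simp
  · -- jump conditions
    intro j hj _
    obtain ⟨k, rfl⟩ : ∃ k, j = k + 1 := ⟨j - 1, (Nat.succ_pred_eq_of_pos hj).symm⟩
    have u1 : UniqueDiffOn ℝ (Icc (-1 : ℝ) αh) := uniqueDiffOn_Icc hα₁
    have u2 : UniqueDiffOn ℝ (Icc αh (1 : ℝ)) := uniqueDiffOn_Icc hα₂
    have m1 : αh ∈ Icc (-1 : ℝ) αh := ⟨hα₁.le, le_rfl⟩
    have m2 : αh ∈ Icc αh (1 : ℝ) := ⟨le_rfl, hα₂.le⟩
    rw [iteratedDerivWithin_congr (s := Icc (-1 : ℝ) αh) (fun x hx => hA x hx.2) m1,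
      iteratedDerivWithin_congr (s := Icc αh (1 : ℝ)) (fun x hx => hB x hx.1) m2,
      iterDerivWithin_eq_iterDeriv _ hg1 u1 _ _ m1,
      iterDerivWithin_eq_iterDeriv _ hg2 u2 _ _ m2,
      aux_iter F L hFd, aux_iter F L hFd]
    field_simp
end

section
/- Let p ≥ 1, β⁻, β⁺ > 0 and s < α < t, with β(x) = β⁻ for x ∈ (s,α) and β(x) = β⁺ for x ∈ (α,t). Suppose g₁, …, g_p ∈ (s,t) with every g_j ≠ α, and weights A₁, …, A_p satisfy Σ_j A_j F(g_j) = ∫_s^t F(x)/β(x) dx for every polynomial F of degree ≤ 2p−1. If v : [s,t] → ℝ is continuous and coincides with polynomials v⁻ on [s,α] and v⁺ on [α,t] of degree ≤ p satisfying β⁻ (v⁻)⁽ʲ⁾(α) = β⁺ (v⁺)⁽ʲ⁾(α) for j = 1, …, p, then Σ_{j=1}^{p} A_j (β(g_j) v′(g_j))² = ∫_s^t β(x) v′(x)² dx. -/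
open Set

/-- The piecewise-constant diffusion coefficient with interface point `α`. -/
noncomputable def betaPW (βm βp α : ℝ) : ℝ → ℝ := fun t => if t < α then βm else βp

/-- A real polynomial all of whose iterated derivatives vanish at a point is zero. -/
lemma poly_eq_zero_of_iterate_deriv_eval_zero (q : Polynomial ℝ) (α : ℝ)
    (h : ∀ i, ((⇑Polynomial.derivative)^[i] q).eval α = 0) : q = 0 := by
  have : Polynomial.taylor α q = Polynomial.taylor α 0 := by
    ext n
    rw [Polynomial.taylor_coeff]
    have hfac : (n.factorial : ℝ) • (Polynomial.hasseDeriv n q).eval α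
        = ((⇑Polynomial.derivative)^[n] q).eval α := by
      rw [← Polynomial.factorial_smul_hasseDeriv]
      simp
    have hne : (n.factorial : ℝ) ≠ 0 := by exact_mod_cast Nat.factorial_ne_zero n
    have := hfac.trans (h n)
    simp only [smul_eq_mul] at this
    have := mul_eq_zero.mp this
    simp [this.resolve_left hne]
  exact Polynomial.taylor_injective α this

/-- the exactness identity (3.2): if the weighted Gauss quadrature with weight
`1/β` is exact for polynomials of degree ≤ 2p−1 and `v` is an immersed finite element
function on the interface element (piecewise polynomial of degree ≤ p satisfying the
derivative jump conditions), then
`Σ_j A_j (β(g_j) v′(g_j))² = ∫_s^t β(x) v′(x)² dx`. -/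
theorem stmt_5 (p : ℕ) (hp : 1 ≤ p) (βm βp s α t : ℝ)
    (hβm : 0 < βm) (hβp : 0 < βp) (hsα : s < α) (hαt : α < t)
    (g A : ℕ → ℝ)
    (hg : ∀ j ∈ Finset.Icc 1 p, g j ∈ Ioo s t ∧ g j ≠ α)
    (hquad : ∀ F : Polynomial ℝ, F.natDegree ≤ 2 * p - 1 →
      ∑ j ∈ Finset.Icc 1 p, A j * F.eval (g j)
        = ∫ x in s..t, F.eval x / betaPW βm βp α x)
    (v : ℝ → ℝ) (hvc : ContinuousOn v (Icc s t))
    (vm vp : Polynomial ℝ) (hdm : vm.natDegree ≤ p) (hdp : vp.natDegree ≤ p)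
    (hvm : ∀ y ∈ Icc s α, v y = vm.eval y)
    (hvp : ∀ y ∈ Icc α t, v y = vp.eval y)
    (hjump : ∀ j, 1 ≤ j → j ≤ p →
      βm * ((⇑Polynomial.derivative)^[j] vm).eval α
        = βp * ((⇑Polynomial.derivative)^[j] vp).eval α) :
    ∑ j ∈ Finset.Icc 1 p, A j * (betaPW βm βp α (g j) * deriv v (g j)) ^ 2
      = ∫ x in s..t, betaPW βm βp α x * (deriv v x) ^ 2 := by
  classical
  set W : Polynomial ℝ := Polynomial.C βm * vm.derivative with hWdef
  -- The jump conditions force the two flux polynomials to coincide.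
  have hW : Polynomial.C βp * vp.derivative = W := by
    have hq : W - Polynomial.C βp * vp.derivative = 0 := by
      apply poly_eq_zero_of_iterate_deriv_eval_zero _ α
      intro i
      by_cases hi : i ≤ p - 1
      · have h1 : ((⇑Polynomial.derivative)^[i] W).eval α
            = βm * ((⇑Polynomial.derivative)^[i+1] vm).eval α := by
          rw [hWdef, Polynomial.iterate_derivative_C_mul, Polynomial.eval_mul,
            Polynomial.eval_C, Function.iterate_succ_apply]
        have h2 : ((⇑Polynomial.derivative)^[i] (Polynomial.C βp * vp.derivative)).eval α
            = βp * ((⇑Polynomial.derivative)^[i+1] vp).eval α := by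
          rw [Polynomial.iterate_derivative_C_mul, Polynomial.eval_mul,
            Polynomial.eval_C, Function.iterate_succ_apply]
        rw [Polynomial.iterate_derivative_sub, Polynomial.eval_sub, h1, h2,
          hjump (i+1) (by omega) (by omega), sub_self]
      · have hlt : (W - Polynomial.C βp * vp.derivative).natDegree < i := by
          have dW : W.natDegree ≤ p - 1 :=
            (Polynomial.natDegree_C_mul_le _ _).trans
              ((Polynomial.natDegree_derivative_le _).trans (by omega))
          have dV : (Polynomial.C βp * vp.derivative).natDegree ≤ p - 1 :=
            (Polynomial.natDegree_C_mul_le _ _).trans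
              ((Polynomial.natDegree_derivative_le _).trans (by omega))
          have := Polynomial.natDegree_sub_le W (Polynomial.C βp * vp.derivative)
          omega
        rw [Polynomial.iterate_derivative_eq_zero hlt, Polynomial.eval_zero]
    exact (sub_eq_zero.mp hq).symm
  -- Derivative of v on each side of the interface.
  have hderivm : ∀ x ∈ Ioo s α, deriv v x = vm.derivative.eval x := by
    intro x hx
    have hev : v =ᶠ[nhds x] fun y => vm.eval y := by
      filter_upwards [Ioo_mem_nhds hx.1 hx.2] with y hy
      exact hvm y ⟨hy.1.le, hy.2.le⟩
    rw [hev.deriv_eq, Polynomial.deriv]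
  have hderivp : ∀ x ∈ Ioo α t, deriv v x = vp.derivative.eval x := by
    intro x hx
    have hev : v =ᶠ[nhds x] fun y => vp.eval y := by
      filter_upwards [Ioo_mem_nhds hx.1 hx.2] with y hy
      exact hvp y ⟨hy.1.le, hy.2.le⟩
    rw [hev.deriv_eq, Polynomial.deriv]
  set F : Polynomial ℝ := W * W with hFdef
  have hdF : F.natDegree ≤ 2 * p - 1 := by
    have dW : W.natDegree ≤ p - 1 :=
      (Polynomial.natDegree_C_mul_le _ _).trans
        ((Polynomial.natDegree_derivative_le _).trans (by omega))
    have := Polynomial.natDegree_mul_le (p := W) (q := W)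
    rw [hFdef]
    omega
  -- Pointwise identity off the interface.
  have key : ∀ x ∈ Ioo s t, x ≠ α →
      betaPW βm βp α x * (deriv v x) ^ 2 = F.eval x / betaPW βm βp α x := by
    intro x hx hxα
    rcases lt_or_gt_of_ne hxα with h | h
    · have hb : betaPW βm βp α x = βm := if_pos h
      rw [hb, hderivm x ⟨hx.1, h⟩, hFdef, Polynomial.eval_mul, hWdef,
        Polynomial.eval_mul, Polynomial.eval_C]
      field_simp
    · have hb : betaPW βm βp α x = βp := if_neg (not_lt.mpr h.le)
      rw [hb, hderivp x ⟨h, hx.2⟩, hFdef, ← hW, Polynomial.eval_mul,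
        Polynomial.eval_mul, Polynomial.eval_C]
      field_simp
  -- Rewrite the quadrature sum.
  have hsum : ∑ j ∈ Finset.Icc 1 p, A j * (betaPW βm βp α (g j) * deriv v (g j)) ^ 2
      = ∑ j ∈ Finset.Icc 1 p, A j * F.eval (g j) := by
    refine Finset.sum_congr rfl fun j hj => ?_
    obtain ⟨hgj, hne⟩ := hg j hj
    congr 1
    rcases lt_or_gt_of_ne hne with h | h
    · have hb : betaPW βm βp α (g j) = βm := if_pos h
      rw [hb, hderivm _ ⟨hgj.1, h⟩, hFdef, Polynomial.eval_mul, hWdef,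
        Polynomial.eval_mul, Polynomial.eval_C]
      ring
    · have hb : betaPW βm βp α (g j) = βp := if_neg (not_lt.mpr h.le)
      rw [hb, hderivp _ ⟨h, hgj.2⟩, hFdef, ← hW, Polynomial.eval_mul,
        Polynomial.eval_mul, Polynomial.eval_C]
      ring
  -- Rewrite the integral.
  have hint : (∫ x in s..t, F.eval x / betaPW βm βp α x)
      = ∫ x in s..t, betaPW βm βp α x * (deriv v x) ^ 2 := by
    apply intervalIntegral.integral_congr_ae
    have h1 : ∀ᵐ x : ℝ, x ≠ α := by
      rw [MeasureTheory.ae_iff]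
      simpa using Real.volume_singleton (a := α)
    have h2 : ∀ᵐ x : ℝ, x ≠ t := by
      rw [MeasureTheory.ae_iff]
      simpa using Real.volume_singleton (a := t)
    filter_upwards [h1, h2] with x hx1 hx2 hmem
    rw [uIoc_of_le (le_of_lt (hsα.trans hαt))] at hmem
    exact (key x ⟨hmem.1, lt_of_le_of_ne hmem.2 hx2⟩ hx1).symm
  rw [hsum, hquad F hdF, hint]
end

section
/- For every v in the immersed trial space U_T, |v|²_G := Σ_{i=1}^{N} Σ_{j=1}^{p} A_{i,j} (β(g_{i,j}) v′(g_{i,j}))² = ∫_a^b β(x) v′(x)² dx. Consequently ‖v‖₁ ≤ ‖v‖_G ≤ (1 + max(β⁻,β⁺))^{1/2} ‖v‖₁, where ‖v‖²₁ = ∫_a^b (v′(x)² + v(x)²) dx and ‖v‖²_G = |v|²_G + ‖v‖²₁; i.e. the norms ‖·‖₁ and ‖·‖_G are equivalent on U_T. -/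
open Set

/-- Membership in the immersed trial space `U_T`: continuous on `[a,b]`, zero boundary
values, a polynomial of degree ≤ p on each non-interface element `[x_{i-1}, x_i]` (i ≠ k),
and on the interface element `[x_{k-1}, x_k]` a continuous piecewise polynomial of degree ≤ p
satisfying the derivative jump conditions at the interface `α`. -/
def MemUT (p N k : ℕ) (a b α βm βp : ℝ) (x : ℕ → ℝ) (v : ℝ → ℝ) : Prop :=
  ContinuousOn v (Set.Icc a b) ∧ v a = 0 ∧ v b = 0 ∧
  (∀ i, 1 ≤ i → i ≤ N → i ≠ k → ∃ q : Polynomial ℝ, q.natDegree ≤ p ∧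
    ∀ y ∈ Set.Icc (x (i - 1)) (x i), v y = q.eval y) ∧
  ∃ qm qp : Polynomial ℝ, qm.natDegree ≤ p ∧ qp.natDegree ≤ p ∧
    (∀ y ∈ Set.Icc (x (k - 1)) α, v y = qm.eval y) ∧
    (∀ y ∈ Set.Icc α (x k), v y = qp.eval y) ∧
    ∀ j, 1 ≤ j → j ≤ p →
      βm * ((⇑Polynomial.derivative)^[j] qm).eval α
        = βp * ((⇑Polynomial.derivative)^[j] qp).eval α

/-- The squared discrete flux seminorm `|u|²_G = Σᵢ Σⱼ A_{i,j} (β(g_{i,j}) u′(g_{i,j}))²`. -/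
noncomputable def gseminormSq (N p : ℕ) (βm βp α : ℝ) (g A : ℕ → ℕ → ℝ) (u : ℝ → ℝ) : ℝ :=
  ∑ i ∈ Finset.Icc 1 N, ∑ j ∈ Finset.Icc 1 p,
    A i j * (betaPW βm βp α (g i j) * deriv u (g i j)) ^ 2

/-- The discrete energy norm `‖u‖_G`, where `‖u‖²_G = |u|²_G + ‖u‖²₁`. -/
noncomputable def gnorm (N p : ℕ) (a b βm βp α : ℝ) (g A : ℕ → ℕ → ℝ) (u : ℝ → ℝ) : ℝ :=
  Real.sqrt (gseminormSq N p βm βp α g A u + ∫ t in a..b, ((deriv u t) ^ 2 + (u t) ^ 2))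

-- auxiliary lemmas
lemma poly_eq_zero_of_iter_deriv (r : Polynomial ℝ) (c : ℝ) (n : ℕ)
    (hdeg : r.natDegree ≤ n)
    (h : ∀ m ≤ n, ((⇑Polynomial.derivative)^[m] r).eval c = 0) : r = 0 := by
  apply Polynomial.taylor_injective c
  rw [map_zero]
  ext m
  rw [Polynomial.coeff_zero]
  by_cases hm : m ≤ n
  · rw [Polynomial.taylor_coeff]
    have h2 := h m hm
    have h3 : ((Nat.factorial m) • Polynomial.hasseDeriv m) r = (⇑Polynomial.derivative)^[m] r :=
      congrFun (Polynomial.factorial_smul_hasseDeriv (R := ℝ) (k := m)) r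
    have h5 : ((Nat.factorial m : ℕ) : ℝ) * (Polynomial.hasseDeriv m r).eval c = 0 := by
      have h4 : (((Nat.factorial m) • Polynomial.hasseDeriv m) r).eval c = 0 := by rw [h3]; exact h2
      simpa [nsmul_eq_mul] using h4
    have : ((Nat.factorial m : ℕ) : ℝ) ≠ 0 := Nat.cast_ne_zero.mpr (Nat.factorial_ne_zero m)
    exact (mul_eq_zero.mp h5).resolve_left this
  · apply Polynomial.coeff_eq_zero_of_natDegree_lt
    rw [Polynomial.natDegree_taylor]
    omega

open MeasureTheory in
lemma ae_ne_point (c : ℝ) : ∀ᵐ t ∂(volume : Measure ℝ), t ≠ c := by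
  rw [MeasureTheory.ae_iff]
  simpa using Real.volume_singleton (x := c)

open MeasureTheory in
lemma elem_facts (βm βp α u w : ℝ) (hβm : 0 < βm) (hβp : 0 < βp) (huw : u < w)
    (q : Polynomial ℝ) (v : ℝ → ℝ)
    (hprop : ∀ t ∈ Set.Ioo u w, t ≠ α → betaPW βm βp α t * deriv v t = q.eval t)
    (hv2 : IntegrableOn (fun t => (v t)^2) (Set.Ioc u w)) :
    (∫ t in u..w, (q.eval t)^2 / betaPW βm βp α t
        = ∫ t in u..w, betaPW βm βp α t * (deriv v t)^2)
    ∧ IntervalIntegrable (fun t => betaPW βm βp α t * (deriv v t)^2) volume u w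
    ∧ IntervalIntegrable (fun t => (deriv v t)^2 + (v t)^2) volume u w := by
  have hβmeas : Measurable (betaPW βm βp α) := by
    unfold betaPW
    exact Measurable.ite measurableSet_Iio measurable_const measurable_const
  have hβpos : ∀ t, 0 < betaPW βm βp α t := by
    intro t; simp only [betaPW]; split_ifs <;> assumption
  have hβinv : ∀ t, (betaPW βm βp α t)⁻¹ ≤ βm⁻¹ + βp⁻¹ := by
    intro t; simp only [betaPW]; split_ifs
    · nlinarith [inv_pos.mpr hβp]
    · nlinarith [inv_pos.mpr hβm]
  have hae : ∀ᵐ t ∂(volume : Measure ℝ), t ≠ w ∧ t ≠ α :=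
    (ae_ne_point w).and (ae_ne_point α)
  have hkey : ∀ t, t ∈ Set.Ioc u w → t ≠ w → t ≠ α →
      betaPW βm βp α t * deriv v t = q.eval t := by
    intro t ht hw hα
    exact hprop t ⟨ht.1, lt_of_le_of_ne ht.2 hw⟩ hα
  have hval : ∀ t, t ∈ Set.Ioc u w → t ≠ w → t ≠ α →
      (q.eval t)^2 / betaPW βm βp α t = betaPW βm βp α t * (deriv v t)^2 := by
    intro t ht hw hα
    have h1 := hkey t ht hw hα
    rw [← h1]
    field_simp [ne_of_gt (hβpos t)]
  have hderiv : ∀ t, t ∈ Set.Ioc u w → t ≠ w → t ≠ α →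
      deriv v t = q.eval t / betaPW βm βp α t := by
    intro t ht hw hα
    rw [eq_div_iff (ne_of_gt (hβpos t)), mul_comm]
    exact hkey t ht hw hα
  have h0int : IntegrableOn (fun t => (q.eval t)^2 / betaPW βm βp α t) (Set.Ioc u w) := by
    apply MeasureTheory.Integrable.mono'
      (g := fun t => (βm⁻¹ + βp⁻¹) * (q.eval t)^2)
    · exact (continuous_const.mul ((q.continuous).pow 2)).integrableOn_Ioc
    · exact (((q.continuous).pow 2).measurable.div hβmeas).aestronglyMeasurable
    · filter_upwards with t
      rw [Real.norm_eq_abs,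
        abs_of_nonneg (div_nonneg (sq_nonneg _) (hβpos t).le), div_eq_mul_inv]
      nlinarith [sq_nonneg (q.eval t), hβinv t, (inv_pos.mpr (hβpos t)).le]
  have h1int : IntegrableOn
      (fun t => (q.eval t / betaPW βm βp α t)^2 + (v t)^2) (Set.Ioc u w) := by
    apply MeasureTheory.Integrable.add _ hv2
    apply MeasureTheory.Integrable.mono'
      (g := fun t => (βm⁻¹ + βp⁻¹)^2 * (q.eval t)^2)
    · exact (continuous_const.mul ((q.continuous).pow 2)).integrableOn_Ioc
    · exact (((q.continuous).measurable.div hβmeas).pow_const 2).aestronglyMeasurable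
    · filter_upwards with t
      rw [Real.norm_eq_abs, abs_of_nonneg (sq_nonneg _), div_pow, div_eq_mul_inv, ← inv_pow]
      have h2 : ((betaPW βm βp α t)⁻¹)^2 ≤ (βm⁻¹ + βp⁻¹)^2 :=
        pow_le_pow_left₀ (inv_pos.mpr (hβpos t)).le (hβinv t) 2
      nlinarith [h2, sq_nonneg (q.eval t)]
  have haeIoc : ∀ᵐ t ∂(volume.restrict (Set.Ioc u w)), t ≠ w ∧ t ≠ α :=
    MeasureTheory.ae_mono MeasureTheory.Measure.restrict_le_self hae
  have haemem : ∀ᵐ t ∂(volume.restrict (Set.Ioc u w)), t ∈ Set.Ioc u w :=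
    MeasureTheory.ae_restrict_mem measurableSet_Ioc
  refine ⟨?_, ?_, ?_⟩
  · apply intervalIntegral.integral_congr_ae
    filter_upwards [hae] with t ht hmem
    rw [Set.uIoc_of_le huw.le] at hmem
    exact hval t hmem ht.1 ht.2
  · rw [intervalIntegrable_iff, Set.uIoc_of_le huw.le]
    apply h0int.congr
    filter_upwards [haeIoc, haemem] with t ht hmem
    exact hval t hmem ht.1 ht.2
  · rw [intervalIntegrable_iff, Set.uIoc_of_le huw.le]
    apply h1int.congr
    filter_upwards [haeIoc, haemem] with t ht hmem
    rw [hderiv t hmem ht.1 ht.2]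

/-- for every `v` in the immersed trial space `U_T`,
`|v|²_G = ∫_a^b β (v′)²`; consequently `‖v‖₁ ≤ ‖v‖_G ≤ (1 + max(β⁻,β⁺))^(1/2) ‖v‖₁`, i.e.
the norms `‖·‖₁` and `‖·‖_G` are equivalent on `U_T`. -/
theorem stmt_6 (p N k : ℕ) (hp : 1 ≤ p)
    (a b α βm βp : ℝ) (hβm : 0 < βm) (hβp : 0 < βp)
    (x : ℕ → ℝ) (g A : ℕ → ℕ → ℝ)
    (hmesh : 1 ≤ N ∧
      1 ≤ k ∧
      k ≤ N ∧
      a < b ∧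
      x 0 = a ∧
      x N = b ∧
      (∀ i, i < N → x i < x (i + 1)) ∧
      x (k - 1) < α ∧
      α < x k ∧
      (∀ i ∈ Finset.Icc 1 N, ∀ j ∈ Finset.Icc 1 p,
      x (i - 1) < g i j ∧ g i j < x i ∧ g i j ≠ α) ∧
      (∀ i ∈ Finset.Icc 1 N, ∀ j, 1 ≤ j → j < p → g i j < g i (j + 1)) ∧
      (∀ i ∈ Finset.Icc 1 N, ∀ j ∈ Finset.Icc 1 p, 0 < A i j) ∧
      (∀ i ∈ Finset.Icc 1 N, ∀ F : Polynomial ℝ, F.natDegree ≤ 2 * p - 1 →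
      ∑ j ∈ Finset.Icc 1 p, A i j * F.eval (g i j)
        = ∫ t in (x (i - 1))..(x i), F.eval t / betaPW βm βp α t))
    (v : ℝ → ℝ) (hv : MemUT p N k a b α βm βp x v) :
    gseminormSq N p βm βp α g A v = (∫ t in a..b, betaPW βm βp α t * (deriv v t) ^ 2) ∧
    Real.sqrt (∫ t in a..b, ((deriv v t) ^ 2 + (v t) ^ 2)) ≤ gnorm N p a b βm βp α g A v ∧
    gnorm N p a b βm βp α g A v
      ≤ Real.sqrt (1 + max βm βp) * Real.sqrt (∫ t in a..b, ((deriv v t) ^ 2 + (v t) ^ 2)) := by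
  obtain ⟨hN, hk1, hkN, hab, hx0, hxN, hxlt, hxkm, hxk, hg, hgord, hA, hquad⟩ := hmesh
  obtain ⟨hvc, hva, hvb, hpoly, qm, qp, hqmdeg, hqpdeg, hvm, hvp, hjump⟩ := hv
  -- monotonicity of the mesh
  have hxmono : ∀ i j, i ≤ j → j ≤ N → x i ≤ x j := by
    have H : ∀ j, j ≤ N → ∀ i, i ≤ j → x i ≤ x j := by
      intro j
      induction j with
      | zero =>
        intro _ i hi
        have : i = 0 := by omega
        subst this; exact le_rfl
      | succ n ih =>
        intro hjN i hij
        rcases Nat.lt_or_ge i (n + 1) with h | h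
        · exact le_trans (ih (by omega) i (by omega)) (hxlt n (by omega)).le
        · have : i = n + 1 := by omega
          subst this; exact le_rfl
    exact fun i j hij hjN => H j hjN i hij
  -- the flux polynomial on the interface element is single-valued
  have hW : Polynomial.C βm * qm.derivative = Polynomial.C βp * qp.derivative := by
    have hz : Polynomial.C βm * qm.derivative - Polynomial.C βp * qp.derivative = 0 := by
      apply poly_eq_zero_of_iter_deriv _ α (p - 1)
      · refine le_trans (Polynomial.natDegree_sub_le _ _) (max_le ?_ ?_)
        · exact le_trans (Polynomial.natDegree_C_mul_le _ _)
            (le_trans (Polynomial.natDegree_derivative_le _) (Nat.sub_le_sub_right hqmdeg 1))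
        · exact le_trans (Polynomial.natDegree_C_mul_le _ _)
            (le_trans (Polynomial.natDegree_derivative_le _) (Nat.sub_le_sub_right hqpdeg 1))
      · intro m hm
        rw [Polynomial.iterate_derivative_sub, Polynomial.iterate_derivative_C_mul,
          Polynomial.iterate_derivative_C_mul]
        have h1 : (⇑Polynomial.derivative)^[m] qm.derivative
            = (⇑Polynomial.derivative)^[m + 1] qm := by
          rw [Function.iterate_succ_apply]
        have h2 : (⇑Polynomial.derivative)^[m] qp.derivative
            = (⇑Polynomial.derivative)^[m + 1] qp := by
          rw [Function.iterate_succ_apply]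
        have h3 := hjump (m + 1) (by omega) (by omega)
        simp only [Polynomial.eval_sub, Polynomial.eval_mul, Polynomial.eval_C, h1, h2]
        linarith
    have := sub_eq_zero.mp hz
    exact this
  -- per-element flux polynomial
  have helem : ∀ i ∈ Finset.Icc 1 N, ∃ q : Polynomial ℝ,
      q.natDegree ≤ p - 1 ∧
      ∀ t ∈ Set.Ioo (x (i - 1)) (x i), t ≠ α →
        betaPW βm βp α t * deriv v t = q.eval t := by
    intro i hi
    rw [Finset.mem_Icc] at hi
    by_cases hik : i = k
    · subst hik
      refine ⟨Polynomial.C βm * qm.derivative, ?_, ?_⟩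
      · exact le_trans (Polynomial.natDegree_C_mul_le _ _)
          (le_trans (Polynomial.natDegree_derivative_le _) (Nat.sub_le_sub_right hqmdeg 1))
      · intro t ht htα
        rcases lt_or_gt_of_ne htα with hlt | hgt
        · have hd : deriv v t = qm.derivative.eval t := by
            have heq : v =ᶠ[nhds t] fun y => qm.eval y := by
              filter_upwards [Ioo_mem_nhds ht.1 hlt] with y hy
              exact hvm y ⟨hy.1.le, hy.2.le⟩
            rw [heq.deriv_eq, Polynomial.deriv]
          have hb : betaPW βm βp α t = βm := if_pos hlt
          rw [hb, hd, Polynomial.eval_mul, Polynomial.eval_C]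
        · have hd : deriv v t = qp.derivative.eval t := by
            have heq : v =ᶠ[nhds t] fun y => qp.eval y := by
              filter_upwards [Ioo_mem_nhds hgt ht.2] with y hy
              exact hvp y ⟨hy.1.le, hy.2.le⟩
            rw [heq.deriv_eq, Polynomial.deriv]
          have hb : betaPW βm βp α t = βp := if_neg (not_lt.mpr hgt.le)
          rw [hb, hd, hW, Polynomial.eval_mul, Polynomial.eval_C]
    · obtain ⟨q, hqdeg, hq⟩ := hpoly i hi.1 hi.2 hik
      have hd : ∀ t ∈ Set.Ioo (x (i - 1)) (x i), deriv v t = q.derivative.eval t := by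
        intro t ht
        have heq : v =ᶠ[nhds t] fun y => q.eval y := by
          filter_upwards [Ioo_mem_nhds ht.1 ht.2] with y hy
          exact hq y ⟨hy.1.le, hy.2.le⟩
        rw [heq.deriv_eq, Polynomial.deriv]
      rcases Nat.lt_or_ge i k with hik2 | hik2
      · refine ⟨Polynomial.C βm * q.derivative, ?_, ?_⟩
        · exact le_trans (Polynomial.natDegree_C_mul_le _ _)
            (le_trans (Polynomial.natDegree_derivative_le _) (Nat.sub_le_sub_right hqdeg 1))
        · intro t ht htα
          have hlt : t < α := by
            have : x i ≤ x (k - 1) := hxmono i (k - 1) (by omega) (by omega)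
            linarith [ht.2]
          have hb : betaPW βm βp α t = βm := if_pos hlt
          rw [hb, hd t ht, Polynomial.eval_mul, Polynomial.eval_C]
      · have hik3 : k < i := by omega
        refine ⟨Polynomial.C βp * q.derivative, ?_, ?_⟩
        · exact le_trans (Polynomial.natDegree_C_mul_le _ _)
            (le_trans (Polynomial.natDegree_derivative_le _) (Nat.sub_le_sub_right hqdeg 1))
        · intro t ht htα
          have hgt : α < t := by
            have : x k ≤ x (i - 1) := hxmono k (i - 1) (by omega) (by omega)
            linarith [ht.1]
          have hb : betaPW βm βp α t = βp := if_neg (not_lt.mpr hgt.le)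
          rw [hb, hd t ht]
          rw [Polynomial.eval_mul, Polynomial.eval_C]
  -- element endpoints and inclusion in [a,b]
  have hlt_i : ∀ i, 1 ≤ i → i ≤ N → x (i - 1) < x i := by
    intro i h1 h2
    have := hxlt (i - 1) (by omega)
    have he : i - 1 + 1 = i := by omega
    rwa [he] at this
  have hv2glob : MeasureTheory.IntegrableOn (fun t => (v t)^2) (Set.Icc a b) :=
    (hvc.pow 2).integrableOn_Icc
  have hv2 : ∀ i, 1 ≤ i → i ≤ N →
      MeasureTheory.IntegrableOn (fun t => (v t)^2) (Set.Ioc (x (i - 1)) (x i)) := by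
    intro i h1 h2
    apply hv2glob.mono_set
    refine Set.Ioc_subset_Icc_self.trans (Set.Icc_subset_Icc ?_ ?_)
    · rw [← hx0]; exact hxmono 0 (i - 1) (by omega) (by omega)
    · rw [← hxN]; exact hxmono i N (by omega) (by omega)
  -- combined per-element facts
  have key : ∀ i ∈ Finset.Icc 1 N,
      ((∑ j ∈ Finset.Icc 1 p, A i j * (betaPW βm βp α (g i j) * deriv v (g i j)) ^ 2)
        = ∫ t in x (i - 1)..x i, betaPW βm βp α t * (deriv v t)^2)
      ∧ IntervalIntegrable (fun t => betaPW βm βp α t * (deriv v t)^2)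
          MeasureTheory.volume (x (i - 1)) (x i)
      ∧ IntervalIntegrable (fun t => (deriv v t)^2 + (v t)^2)
          MeasureTheory.volume (x (i - 1)) (x i) := by
    intro i hi
    have hi' := Finset.mem_Icc.mp hi
    obtain ⟨q, hqdeg, hq⟩ := helem i hi
    have huw : x (i - 1) < x i := hlt_i i hi'.1 hi'.2
    obtain ⟨e1, e2, e3⟩ := elem_facts βm βp α (x (i - 1)) (x i) hβm hβp huw q v hq
      (hv2 i hi'.1 hi'.2)
    refine ⟨?_, e2, e3⟩
    have hs : (∑ j ∈ Finset.Icc 1 p, A i j * (betaPW βm βp α (g i j) * deriv v (g i j)) ^ 2)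
        = ∑ j ∈ Finset.Icc 1 p, A i j * (q ^ 2).eval (g i j) := by
      apply Finset.sum_congr rfl
      intro j hj
      obtain ⟨hg1, hg2, hg3⟩ := hg i hi j hj
      rw [hq (g i j) ⟨hg1, hg2⟩ hg3, Polynomial.eval_pow]
    have hdeg2 : (q ^ 2).natDegree ≤ 2 * p - 1 := by
      refine le_trans Polynomial.natDegree_pow_le ?_
      have : q.natDegree ≤ p - 1 := hqdeg
      omega
    rw [hs, hquad i hi (q ^ 2) hdeg2]
    rw [← e1]
    apply intervalIntegral.integral_congr
    intro t _
    simp [Polynomial.eval_pow]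
  -- sum the per-element identities
  set f : ℝ → ℝ := fun t => betaPW βm βp α t * (deriv v t)^2 with hf
  set f2 : ℝ → ℝ := fun t => (deriv v t)^2 + (v t)^2 with hf2
  have hint1 : ∀ m, m < N → IntervalIntegrable f MeasureTheory.volume (x m) (x (m + 1)) := by
    intro m hm
    have := (key (m + 1) (Finset.mem_Icc.mpr ⟨by omega, by omega⟩)).2.1
    simpa using this
  have hint2 : ∀ m, m < N → IntervalIntegrable f2 MeasureTheory.volume (x m) (x (m + 1)) := by
    intro m hm
    have := (key (m + 1) (Finset.mem_Icc.mpr ⟨by omega, by omega⟩)).2.2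
    simpa using this
  have hfab : IntervalIntegrable f MeasureTheory.volume a b := by
    rw [← hx0, ← hxN]; exact IntervalIntegrable.trans_iterate hint1
  have hf2ab : IntervalIntegrable f2 MeasureTheory.volume a b := by
    rw [← hx0, ← hxN]; exact IntervalIntegrable.trans_iterate hint2
  have hsum : gseminormSq N p βm βp α g A v = ∫ t in a..b, f t := by
    rw [gseminormSq]
    have h1 : ∀ i ∈ Finset.Icc 1 N,
        (∑ j ∈ Finset.Icc 1 p, A i j * (betaPW βm βp α (g i j) * deriv v (g i j)) ^ 2)
          = ∫ t in x (i - 1)..x i, f t := fun i hi => (key i hi).1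
    rw [Finset.sum_congr rfl h1]
    have h2 : (∑ i ∈ Finset.Icc 1 N, ∫ t in x (i - 1)..x i, f t)
        = ∑ m ∈ Finset.range N, ∫ t in x m..x (m + 1), f t := by
      rw [← Finset.Ico_add_one_right_eq_Icc, Finset.sum_Ico_eq_sum_range]
      simp [Nat.add_comm]
    rw [h2, intervalIntegral.sum_integral_adjacent_intervals hint1, hx0, hxN]
  have hSnn : 0 ≤ gseminormSq N p βm βp α g A v := by
    apply Finset.sum_nonneg
    intro i hi
    apply Finset.sum_nonneg
    intro j hj
    exact mul_nonneg (hA i hi j hj).le (sq_nonneg _)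
  have hmaxpos : (0:ℝ) < max βm βp := lt_max_iff.mpr (Or.inl hβm)
  have hfle : ∀ t, f t ≤ max βm βp * f2 t := by
    intro t
    have hble : betaPW βm βp α t ≤ max βm βp := by
      simp only [betaPW]; split_ifs
      · exact le_max_left _ _
      · exact le_max_right _ _
    simp only [hf, hf2]
    nlinarith [sq_nonneg (deriv v t), sq_nonneg (v t)]
  have hIle : (∫ t in a..b, f t) ≤ max βm βp * ∫ t in a..b, f2 t := by
    rw [← intervalIntegral.integral_const_mul]
    exact intervalIntegral.integral_mono hab.le hfab (hf2ab.const_mul _) hfle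
  refine ⟨hsum, ?_, ?_⟩
  · rw [gnorm]
    apply Real.sqrt_le_sqrt
    linarith
  · rw [gnorm, ← Real.sqrt_mul (by linarith : (0:ℝ) ≤ 1 + max βm βp)]
    apply Real.sqrt_le_sqrt
    have : gseminormSq N p βm βp α g A v ≤ max βm βp * ∫ t in a..b, f2 t := by
      rw [hsum]; exact hIle
    have heq : (∫ t in a..b, ((deriv v t) ^ 2 + (v t) ^ 2)) = ∫ t in a..b, f2 t := rfl
    rw [heq]
    nlinarith [this]
end

section
/- For every v in the immersed trial space U_T (so in particular v(a) = v(b) = 0), the total weighted sum of fluxes at all generalized Gauss points vanishes: Σ_{i=1}^{N} Σ_{j=1}^{p} A_{i,j} β(g_{i,j}) v′(g_{i,j}) = 0. -/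
open Set

lemma poly_eq_zero_of_iterate_deriv (D : Polynomial ℝ) (r : ℝ)
    (h : ∀ i, ((⇑Polynomial.derivative)^[i] D).eval r = 0) : D = 0 := by
  apply Polynomial.taylor_injective r
  ext i
  rw [Polynomial.taylor_coeff, map_zero, Polynomial.coeff_zero]
  have h1 : (((Nat.factorial i) • Polynomial.hasseDeriv (R := ℝ) i) D) = (⇑Polynomial.derivative)^[i] D :=
    congrFun (Polynomial.factorial_smul_hasseDeriv (R := ℝ) i) D
  have h2 : (((Nat.factorial i) : ℕ) • (Polynomial.hasseDeriv i D)).eval r = 0 := by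
    rw [show (((Nat.factorial i) : ℕ) • (Polynomial.hasseDeriv i D)) = ((Nat.factorial i) • Polynomial.hasseDeriv (R := ℝ) i) D from rfl,
      h1]
    exact h i
  have h3 : ((Nat.factorial i) : ℝ) * (Polynomial.hasseDeriv i D).eval r = 0 := by
    simpa [nsmul_eq_mul] using h2
  have : ((Nat.factorial i) : ℝ) ≠ 0 := by exact_mod_cast Nat.factorial_ne_zero i
  exact (mul_eq_zero.mp h3).resolve_left this

/-- for every `v` in the immersed trial space `U_T` (so `v(a) = v(b) = 0`),
the total weighted sum of fluxes at all generalized Gauss points vanishes: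
`Σᵢ Σⱼ A_{i,j} β(g_{i,j}) v′(g_{i,j}) = 0`. -/
theorem stmt_7 (p N k : ℕ) (hp : 1 ≤ p)
    (a b α βm βp : ℝ) (hβm : 0 < βm) (hβp : 0 < βp)
    (x : ℕ → ℝ) (g A : ℕ → ℕ → ℝ)
    (hmesh : 1 ≤ N ∧
      1 ≤ k ∧
      k ≤ N ∧
      a < b ∧
      x 0 = a ∧
      x N = b ∧
      (∀ i, i < N → x i < x (i + 1)) ∧
      x (k - 1) < α ∧
      α < x k ∧
      (∀ i ∈ Finset.Icc 1 N, ∀ j ∈ Finset.Icc 1 p,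
      x (i - 1) < g i j ∧ g i j < x i ∧ g i j ≠ α) ∧
      (∀ i ∈ Finset.Icc 1 N, ∀ j, 1 ≤ j → j < p → g i j < g i (j + 1)) ∧
      (∀ i ∈ Finset.Icc 1 N, ∀ j ∈ Finset.Icc 1 p, 0 < A i j) ∧
      (∀ i ∈ Finset.Icc 1 N, ∀ F : Polynomial ℝ, F.natDegree ≤ 2 * p - 1 →
      ∑ j ∈ Finset.Icc 1 p, A i j * F.eval (g i j)
        = ∫ t in (x (i - 1))..(x i), F.eval t / betaPW βm βp α t))
    (v : ℝ → ℝ) (hv : MemUT p N k a b α βm βp x v) :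
    ∑ i ∈ Finset.Icc 1 N, ∑ j ∈ Finset.Icc 1 p,
      A i j * (betaPW βm βp α (g i j) * deriv v (g i j)) = 0 := by
  obtain ⟨hN, hk1, hkN, hab, hx0, hxN, hinc, hxkm, hxk, hg, -, hA, hquad⟩ := hmesh
  obtain ⟨hcont, hva, hvb, hpoly, qm, qp, hqm, hqp, hvm, hvp, hjump⟩ := hv
  -- monotonicity of the mesh
  have hmono : ∀ i j : ℕ, i ≤ j → j ≤ N → x i ≤ x j := by
    intro i j hij hjN
    induction j with
    | zero => rw [Nat.le_zero.mp hij]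
    | succ n ih =>
      rcases Nat.lt_or_ge i (n + 1) with hlt | hge
      · exact le_trans (ih (by omega) (by omega)) (le_of_lt (hinc n (by omega)))
      · have : i = n + 1 := le_antisymm hij hge
        rw [this]
  have key : ∀ i ∈ Finset.Icc 1 N,
      ∑ j ∈ Finset.Icc 1 p, A i j * (betaPW βm βp α (g i j) * deriv v (g i j))
        = v (x i) - v (x (i - 1)) := by
    intro i hi
    have hi' : 1 ≤ i ∧ i ≤ N := Finset.mem_Icc.mp hi
    have hii : i - 1 + 1 = i := by omega
    have hxi : x (i - 1) < x i := by
      have := hinc (i - 1) (by omega)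
      rwa [hii] at this
    by_cases hik : i = k
    · -- interface element
      subst hik
      set F : Polynomial ℝ := Polynomial.C βm * Polynomial.derivative qm with hFdef
      have hFeq : F = Polynomial.C βp * Polynomial.derivative qp := by
        have hD : ∀ n, ((⇑Polynomial.derivative)^[n]
            (F - Polynomial.C βp * Polynomial.derivative qp)).eval α = 0 := by
          intro n
          rcases Nat.lt_or_ge n p with hnp | hnp
          · rw [Polynomial.iterate_derivative_sub, Polynomial.iterate_derivative_C_mul,
              Polynomial.iterate_derivative_C_mul]
            simp only [Polynomial.eval_sub, Polynomial.eval_mul, Polynomial.eval_C]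
            have hj := hjump (n + 1) (by omega) (by omega)
            rw [Function.iterate_succ_apply, Function.iterate_succ_apply] at hj
            linarith
          · have hdeg : (F - Polynomial.C βp * Polynomial.derivative qp).natDegree < n := by
              have h1 : F.natDegree ≤ p - 1 :=
                le_trans (Polynomial.natDegree_C_mul_le _ _)
                  (le_trans (Polynomial.natDegree_derivative_le qm) (by omega))
              have h2 : (Polynomial.C βp * Polynomial.derivative qp).natDegree ≤ p - 1 :=
                le_trans (Polynomial.natDegree_C_mul_le _ _)
                  (le_trans (Polynomial.natDegree_derivative_le qp) (by omega))
              have := Polynomial.natDegree_sub_le F (Polynomial.C βp * Polynomial.derivative qp)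
              omega
            rw [Polynomial.iterate_derivative_eq_zero hdeg]
            simp
        have := poly_eq_zero_of_iterate_deriv _ α hD
        have := sub_eq_zero.mp this
        exact this
      have hFd : F.natDegree ≤ 2 * p - 1 :=
        le_trans (Polynomial.natDegree_C_mul_le _ _)
          (le_trans (Polynomial.natDegree_derivative_le qm) (by omega))
      have hsum : ∀ j ∈ Finset.Icc 1 p,
          A i j * (betaPW βm βp α (g i j) * deriv v (g i j)) = A i j * F.eval (g i j) := by
        intro j hj
        obtain ⟨hg1, hg2, hg3⟩ := hg i hi j hj
        rcases hg3.lt_or_gt with hlt | hgt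
        · have hd : deriv v (g i j) = (Polynomial.derivative qm).eval (g i j) := by
            have hev : v =ᶠ[nhds (g i j)] fun y => qm.eval y :=
              Filter.eventuallyEq_of_mem (Ioo_mem_nhds hg1 hlt)
                (fun y hy => hvm y (Set.Ioo_subset_Icc_self hy))
            rw [hev.deriv_eq, Polynomial.deriv]
          rw [hd]
          simp [betaPW, hlt, hFdef, Polynomial.eval_mul]
        · have hd : deriv v (g i j) = (Polynomial.derivative qp).eval (g i j) := by
            have hev : v =ᶠ[nhds (g i j)] fun y => qp.eval y :=
              Filter.eventuallyEq_of_mem (Ioo_mem_nhds hgt hg2)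
                (fun y hy => hvp y (Set.Ioo_subset_Icc_self hy))
            rw [hev.deriv_eq, Polynomial.deriv]
          rw [hd, hFeq]
          simp [betaPW, not_lt.mpr hgt.le, Polynomial.eval_mul]
      rw [Finset.sum_congr rfl hsum, hquad i hi F hFd]
      set f : ℝ → ℝ := fun t => F.eval t / betaPW βm βp α t with hfdef
      have hfm : ∀ t, t < α → f t = (Polynomial.derivative qm).eval t := by
        intro t ht
        simp only [hfdef, betaPW, if_pos ht, hFdef, Polynomial.eval_mul, Polynomial.eval_C]
        field_simp
      have hfp : ∀ t, ¬ t < α → f t = (Polynomial.derivative qp).eval t := by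
        intro t ht
        simp only [hfdef, betaPW, if_neg ht, hFeq, Polynomial.eval_mul, Polynomial.eval_C]
        field_simp
      have haeα : ∀ᵐ t : ℝ, t ≠ α := by
        have h0 : (MeasureTheory.volume : MeasureTheory.Measure ℝ) {α} = 0 :=
          MeasureTheory.measure_singleton α
        have := MeasureTheory.measure_eq_zero_iff_ae_notMem.mp h0
        simpa using this
      have hI1 : IntervalIntegrable f MeasureTheory.volume (x (i - 1)) α := by
        have hcont1 : IntervalIntegrable (fun t => (Polynomial.derivative qm).eval t)
            MeasureTheory.volume (x (i - 1)) α :=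
          (Polynomial.continuous _).intervalIntegrable _ _
        rw [intervalIntegrable_iff] at hcont1 ⊢
        apply hcont1.congr
        filter_upwards [MeasureTheory.ae_restrict_mem measurableSet_uIoc,
          MeasureTheory.ae_restrict_of_ae haeα] with t hmem htne
        rw [Set.uIoc_of_le hxkm.le] at hmem
        exact (hfm t (lt_of_le_of_ne hmem.2 htne)).symm
      have hI2 : IntervalIntegrable f MeasureTheory.volume α (x i) := by
        have hcont2 : IntervalIntegrable (fun t => (Polynomial.derivative qp).eval t)
            MeasureTheory.volume α (x i) :=
          (Polynomial.continuous _).intervalIntegrable _ _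
        rw [intervalIntegrable_iff] at hcont2 ⊢
        apply hcont2.congr
        filter_upwards [MeasureTheory.ae_restrict_mem measurableSet_uIoc] with t hmem
        rw [Set.uIoc_of_le hxk.le] at hmem
        exact (hfp t (not_lt.mpr hmem.1.le)).symm
      have hsplit := intervalIntegral.integral_add_adjacent_intervals hI1 hI2
      have hI1val : ∫ t in (x (i - 1))..α, f t = qm.eval α - qm.eval (x (i - 1)) := by
        rw [intervalIntegral.integral_congr_ae
          (g := fun t => (Polynomial.derivative qm).eval t) ?_]
        · exact intervalIntegral.integral_eq_sub_of_hasDerivAt (fun t _ => qm.hasDerivAt t)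
            ((Polynomial.continuous _).intervalIntegrable _ _)
        · filter_upwards [haeα] with t htne hmem
          rw [Set.uIoc_of_le hxkm.le] at hmem
          exact hfm t (lt_of_le_of_ne hmem.2 htne)
      have hI2val : ∫ t in α..(x i), f t = qp.eval (x i) - qp.eval α := by
        rw [intervalIntegral.integral_congr (g := fun t => (Polynomial.derivative qp).eval t) ?_]
        · exact intervalIntegral.integral_eq_sub_of_hasDerivAt (fun t _ => qp.hasDerivAt t)
            ((Polynomial.continuous _).intervalIntegrable _ _)
        · intro t ht
          rw [Set.uIcc_of_le hxk.le] at ht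
          exact hfp t (not_lt.mpr ht.1)
      rw [show (∫ t in (x (i - 1))..(x i), F.eval t / betaPW βm βp α t)
            = ∫ t in (x (i - 1))..(x i), f t from rfl,
        ← hsplit, hI1val, hI2val]
      have e1 : v (x (i - 1)) = qm.eval (x (i - 1)) := hvm _ ⟨le_rfl, hxkm.le⟩
      have e2 : v α = qm.eval α := hvm _ ⟨hxkm.le, le_rfl⟩
      have e3 : v α = qp.eval α := hvp _ ⟨le_rfl, hxk.le⟩
      have e4 : v (x i) = qp.eval (x i) := hvp _ ⟨hxk.le, le_rfl⟩
      linarith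
    · -- non-interface element
      obtain ⟨q, hqd, hq⟩ := hpoly i hi'.1 hi'.2 hik
      obtain ⟨c, hcpos, hc⟩ : ∃ c, 0 < c ∧
          ∀ t ∈ Set.Icc (x (i - 1)) (x i), betaPW βm βp α t = c := by
        rcases lt_or_gt_of_ne hik with hlt | hgt
        · refine ⟨βm, hβm, fun t ht => ?_⟩
          have : t < α := lt_of_le_of_lt
            (le_trans ht.2 (hmono i (k - 1) (by omega) (by omega))) hxkm
          simp [betaPW, this]
        · refine ⟨βp, hβp, fun t ht => ?_⟩
          have : α < t := lt_of_lt_of_le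
            (lt_of_lt_of_le hxk (hmono k (i - 1) (by omega) (by omega))) ht.1
          simp [betaPW, not_lt.mpr this.le]
      set F : Polynomial ℝ := Polynomial.C c * Polynomial.derivative q with hFdef
      have hFd : F.natDegree ≤ 2 * p - 1 :=
        le_trans (Polynomial.natDegree_C_mul_le _ _)
          (le_trans (Polynomial.natDegree_derivative_le q) (by omega))
      have hsum : ∀ j ∈ Finset.Icc 1 p,
          A i j * (betaPW βm βp α (g i j) * deriv v (g i j)) = A i j * F.eval (g i j) := by
        intro j hj
        obtain ⟨hg1, hg2, -⟩ := hg i hi j hj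
        have hd : deriv v (g i j) = (Polynomial.derivative q).eval (g i j) := by
          have hev : v =ᶠ[nhds (g i j)] fun y => q.eval y :=
            Filter.eventuallyEq_of_mem (Ioo_mem_nhds hg1 hg2)
              (fun y hy => hq y (Set.Ioo_subset_Icc_self hy))
          rw [hev.deriv_eq, Polynomial.deriv]
        rw [hd, hc _ ⟨hg1.le, hg2.le⟩]
        simp [hFdef, Polynomial.eval_mul]
      rw [Finset.sum_congr rfl hsum, hquad i hi F hFd]
      have hcong : ∀ t ∈ Set.uIcc (x (i - 1)) (x i),
          F.eval t / betaPW βm βp α t = (Polynomial.derivative q).eval t := by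
        intro t ht
        rw [Set.uIcc_of_le hxi.le] at ht
        rw [hc t ht]
        simp only [hFdef, Polynomial.eval_mul, Polynomial.eval_C]
        field_simp
      rw [intervalIntegral.integral_congr hcong,
        intervalIntegral.integral_eq_sub_of_hasDerivAt (fun t _ => q.hasDerivAt t)
          ((Polynomial.continuous _).intervalIntegrable _ _),
        ← hq _ ⟨hxi.le, le_rfl⟩, ← hq _ ⟨le_rfl, hxi.le⟩]
  rw [Finset.sum_congr rfl key]
  have htel : ∑ i ∈ Finset.Icc 1 N, (v (x i) - v (x (i - 1))) = v (x N) - v (x 0) := by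
    rw [show Finset.Icc 1 N = Finset.Ico 1 (N + 1) by rw [Finset.Ico_add_one_right_eq_Icc],
      Finset.sum_Ico_eq_sum_range]
    have hNN : N + 1 - 1 = N := by omega
    rw [hNN]
    have hcg : ∀ i ∈ Finset.range N,
        v (x (1 + i)) - v (x (1 + i - 1)) = v (x (i + 1)) - v (x i) := by
      intro i _
      have h1 : 1 + i = i + 1 := by omega
      have h2 : i + 1 - 1 = i := by omega
      rw [h1, h2]
    rw [Finset.sum_congr rfl hcg, Finset.sum_range_sub (fun i => v (x i))]
  rw [htel, hx0, hxN, hva, hvb, sub_zero]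
end

section
/- There exists a constant C, depending only on p, β⁻, β⁺ and b−a, such that for every v in the immersed trial space U_T the mapped test coefficient vector Π_h v satisfies ‖Π_h v‖_{T'} ≤ C ‖v‖₁, where ‖v‖²₁ = ∫_a^b (v′(x)² + v(x)²) dx. -/
open Set

/-- The previous value `v_{i,j-1}` of a test coefficient vector, with the conventions
`v_{1,0} = 0` and `v_{i,0} = v_{i-1,p}`. -/
noncomputable def vprev (p : ℕ) (w : ℕ → ℕ → ℝ) (i j : ℕ) : ℝ :=
  if j = 1 then (if i = 1 then 0 else w (i - 1) p) else w i (j - 1)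

/-- The jump `[v_{i,j}] = v_{i,j} − v_{i,j−1}` of a test coefficient vector. -/
noncomputable def jmp (p : ℕ) (w : ℕ → ℕ → ℝ) (i j : ℕ) : ℝ := w i j - vprev p w i j

/-- The squared norm `‖v‖²_{T'} = |v|²_{1,T'} + ‖v‖²_{0,T'}` on test coefficient vectors. -/
noncomputable def normTpSq (N p : ℕ) (x : ℕ → ℝ) (w : ℕ → ℕ → ℝ) : ℝ :=
  (∑ i ∈ Finset.Icc 1 N, ∑ j ∈ Finset.Icc 1 p, (x i - x (i - 1))⁻¹ * (jmp p w i j) ^ 2)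
    + ∑ i ∈ Finset.Icc 1 N, ∑ j ∈ Finset.Icc 1 (if i < N then p else p - 1),
        (x i - x (i - 1)) * (w i j) ^ 2

/-- The norm `‖v‖_{T'}` on test coefficient vectors. -/
noncomputable def normTp (N p : ℕ) (x : ℕ → ℝ) (w : ℕ → ℕ → ℝ) : ℝ :=
  Real.sqrt (normTpSq N p x w)

/-- The mapping `Π_h` from trial functions to test coefficient vectors: the entry `(i,j)`
is the partial (lexicographic) sum of `A_{m,n} β(g_{m,n}) v′(g_{m,n})`, so that
`[v_{i,j}] = A_{i,j} β(g_{i,j}) v′(g_{i,j})`, together with the convention `v_{N,p} = 0`. -/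
noncomputable def pih (N p : ℕ) (βm βp α : ℝ) (g A : ℕ → ℕ → ℝ) (v : ℝ → ℝ) :
    ℕ → ℕ → ℝ :=
  fun i j => if i = N ∧ j = p then 0 else
    (∑ m ∈ Finset.Icc 1 (i - 1), ∑ n ∈ Finset.Icc 1 p,
        A m n * (betaPW βm βp α (g m n) * deriv v (g m n)))
      + ∑ n ∈ Finset.Icc 1 j, A i n * (betaPW βm βp α (g i n) * deriv v (g i n))


section Helpers

open MeasureTheory intervalIntegral Set

lemma ae_Ioo_helper {u w : ℝ} (huw : u ≤ w) {f h : ℝ → ℝ}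
    (H : ∀ t ∈ Set.Ioo u w, f t = h t) :
    f =ᵐ[MeasureTheory.volume.restrict (Set.uIoc u w)] h := by
  rw [Set.uIoc_of_le huw]
  have h1 : ∀ᵐ t : ℝ ∂(volume.restrict (Set.Ioc u w)), t ∈ Set.Ioc u w :=
    ae_restrict_mem measurableSet_Ioc
  have h2 : ∀ᵐ t : ℝ ∂(volume.restrict (Set.Ioc u w)), t ≠ w :=
    ae_restrict_of_ae (compl_mem_ae_iff.mpr (measure_singleton w))
  filter_upwards [h1, h2] with t ht hne
  exact H t ⟨ht.1, lt_of_le_of_ne ht.2 hne⟩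

lemma integral_congr_Ioo {u w : ℝ} (huw : u ≤ w) {f h : ℝ → ℝ}
    (H : ∀ t ∈ Set.Ioo u w, f t = h t) :
    ∫ t in u..w, f t = ∫ t in u..w, h t := by
  refine intervalIntegral.integral_congr_ae ?_
  filter_upwards [compl_mem_ae_iff.mpr (measure_singleton w)] with t hne htI
  rw [Set.uIoc_of_le huw] at htI
  exact H t ⟨htI.1, lt_of_le_of_ne htI.2 hne⟩

lemma integrable_congr_Ioo {u w : ℝ} (huw : u ≤ w) {f h : ℝ → ℝ}
    (hh : IntervalIntegrable h volume u w)
    (H : ∀ t ∈ Set.Ioo u w, f t = h t) : IntervalIntegrable f volume u w :=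
  hh.congr_ae (ae_Ioo_helper huw fun t ht => (H t ht).symm)

lemma poly_ftc (q : Polynomial ℝ) (u w : ℝ) :
    ∫ t in u..w, q.derivative.eval t = q.eval w - q.eval u := by
  have hd : (deriv fun s : ℝ => q.eval s) = fun t => q.derivative.eval t :=
    funext fun t => Polynomial.deriv q
  have := intervalIntegral.integral_deriv_eq_sub (f := fun s : ℝ => q.eval s) (a := u) (b := w)
    (fun x _ => q.differentiableAt)
    (by rw [hd]; exact (q.derivative.continuous_aeval).intervalIntegrable _ _)
  rw [hd] at this; exact this

lemma poly_eq_zero_of_derivs {r : Polynomial ℝ} {α : ℝ} {M : ℕ}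
    (hdeg : r.natDegree < M)
    (h : ∀ i < M, ((⇑Polynomial.derivative)^[i] r).eval α = 0) : r = 0 := by
  have htay : Polynomial.taylor α r = 0 := by
    ext i
    rcases lt_or_ge i M with hi | hi
    · rw [Polynomial.taylor_coeff]
      have h3 := congrFun (Polynomial.factorial_smul_hasseDeriv (R := ℝ) i) r
      have h4 : (i.factorial • ((Polynomial.hasseDeriv i) r) : Polynomial ℝ)
          = (⇑Polynomial.derivative)^[i] r := by simpa using h3
      have h5 := h i hi
      rw [← h4] at h5
      simp only [Polynomial.eval_smul, smul_eq_mul, nsmul_eq_mul, Polynomial.eval_mul, Polynomial.eval_natCast] at h5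
      have : (i.factorial : ℝ) ≠ 0 := Nat.cast_ne_zero.mpr i.factorial_ne_zero
      exact (mul_eq_zero.mp h5).resolve_left this
    · have : (Polynomial.taylor α r).natDegree < i :=
        lt_of_lt_of_le (by rw [Polynomial.natDegree_taylor]; omega) le_rfl
      simp [Polynomial.coeff_eq_zero_of_natDegree_lt this]
  apply Polynomial.taylor_injective α (R := ℝ)
  simpa using htay

lemma piece {βm βp α u w βc : ℝ} {v : ℝ → ℝ} (hu : u < w)
    (hβm : 0 < βm) (hβp : 0 < βp)
    (hβc : 0 < βc) (hle : βc ≤ max βm βp) (hge : min βm βp ≤ βc)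
    (hside : ∀ t ∈ Set.Ioo u w, betaPW βm βp α t = βc)
    {q P : Polynomial ℝ} (hq : ∀ y ∈ Set.Icc u w, v y = q.eval y)
    (hP : P = Polynomial.C βc * q.derivative) :
    (∀ t ∈ Set.Ioo u w, betaPW βm βp α t * deriv v t = P.eval t) ∧
    (∫ t in u..w, P.eval t / betaPW βm βp α t) = v w - v u ∧
    IntervalIntegrable (fun t => P.eval t / betaPW βm βp α t) volume u w ∧
    (∫ t in u..w, (P.eval t)^2 / betaPW βm βp α t) = βc * ∫ t in u..w, (deriv v t)^2 ∧
    IntervalIntegrable (fun t => (P.eval t)^2 / betaPW βm βp α t) volume u w ∧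
    IntervalIntegrable (fun t => (deriv v t)^2) volume u w ∧
    (∫ t in u..w, 1 / betaPW βm βp α t) ≤ (w - u) / min βm βp ∧
    IntervalIntegrable (fun t => 1 / betaPW βm βp α t) volume u w := by
  have hmin : 0 < min βm βp := lt_min hβm hβp
  have hβc0 : βc ≠ 0 := ne_of_gt hβc
  have hderiv : ∀ t ∈ Set.Ioo u w, deriv v t = q.derivative.eval t := by
    intro t ht
    have hnb : Set.Ioo u w ∈ nhds t := isOpen_Ioo.mem_nhds ht
    have hev : v =ᶠ[nhds t] fun y => q.eval y :=
      Filter.eventuallyEq_of_mem hnb fun y hy => hq y (Set.Ioo_subset_Icc_self hy)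
    rw [hev.deriv_eq, Polynomial.deriv]
  have hnode : ∀ t ∈ Set.Ioo u w, betaPW βm βp α t * deriv v t = P.eval t := by
    intro t ht
    rw [hside t ht, hderiv t ht, hP]
    simp [Polynomial.eval_mul]
  have e1 : ∀ t ∈ Set.Ioo u w, P.eval t / betaPW βm βp α t = q.derivative.eval t := by
    intro t ht
    rw [hside t ht, hP]
    simp only [Polynomial.eval_mul, Polynomial.eval_C]
    exact mul_div_cancel_left₀ _ hβc0
  have e2 : ∀ t ∈ Set.Ioo u w,
      (P.eval t)^2 / betaPW βm βp α t = βc * (q.derivative.eval t)^2 := by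
    intro t ht
    rw [hside t ht, hP]
    simp only [Polynomial.eval_mul, Polynomial.eval_C]
    field_simp
  have e3 : ∀ t ∈ Set.Ioo u w, (deriv v t)^2 = (q.derivative.eval t)^2 :=
    fun t ht => by rw [hderiv t ht]
  have e4 : ∀ t ∈ Set.Ioo u w, (1:ℝ) / betaPW βm βp α t = 1/βc :=
    fun t ht => by rw [hside t ht]
  have cont1 : Continuous fun t : ℝ => q.derivative.eval t := q.derivative.continuous_aeval
  refine ⟨hnode, ?_, ?_, ?_, ?_, ?_, ?_, ?_⟩
  · rw [integral_congr_Ioo hu.le e1, poly_ftc, hq u (Set.left_mem_Icc.mpr hu.le),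
      hq w (Set.right_mem_Icc.mpr hu.le)]
  · exact integrable_congr_Ioo hu.le (cont1.intervalIntegrable _ _) e1
  · rw [integral_congr_Ioo hu.le e2, integral_congr_Ioo hu.le e3,
      intervalIntegral.integral_const_mul]
  · exact integrable_congr_Ioo hu.le
      ((continuous_const.mul (cont1.pow 2)).intervalIntegrable _ _) e2
  · exact integrable_congr_Ioo hu.le ((cont1.pow 2).intervalIntegrable _ _) e3
  · rw [integral_congr_Ioo hu.le e4, intervalIntegral.integral_const, smul_eq_mul]
    have h1 : (1:ℝ)/βc ≤ 1/(min βm βp) := one_div_le_one_div_of_le hmin hge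
    calc (w-u)*(1/βc) ≤ (w-u)*(1/(min βm βp)) :=
          mul_le_mul_of_nonneg_left h1 (by linarith)
      _ = (w-u)/(min βm βp) := by ring
  · exact integrable_congr_Ioo hu.le (continuous_const.intervalIntegrable _ _) e4

lemma elem {p : ℕ} (hp : 1 ≤ p) {βm βp α u w : ℝ} (hβm : 0 < βm) (hβp : 0 < βp)
    {v : ℝ → ℝ} (hu : u < w)
    (hcase : (∃ βc, 0 < βc ∧ βc ≤ max βm βp ∧ min βm βp ≤ βc ∧
        (∀ t ∈ Set.Ioo u w, betaPW βm βp α t = βc) ∧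
        ∃ q : Polynomial ℝ, q.natDegree ≤ p ∧ ∀ y ∈ Set.Icc u w, v y = q.eval y)
      ∨ (u < α ∧ α < w ∧ ∃ qm qp : Polynomial ℝ, qm.natDegree ≤ p ∧ qp.natDegree ≤ p ∧
          (∀ y ∈ Set.Icc u α, v y = qm.eval y) ∧ (∀ y ∈ Set.Icc α w, v y = qp.eval y) ∧
          ∀ j, 1 ≤ j → j ≤ p → βm * ((⇑Polynomial.derivative)^[j] qm).eval α
            = βp * ((⇑Polynomial.derivative)^[j] qp).eval α)) :
    ∃ P : Polynomial ℝ, P.natDegree ≤ p - 1 ∧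
      (∀ t ∈ Set.Ioo u w, t ≠ α → betaPW βm βp α t * deriv v t = P.eval t) ∧
      (∫ t in u..w, P.eval t / betaPW βm βp α t) = v w - v u ∧
      (∫ t in u..w, (P.eval t)^2 / betaPW βm βp α t)
        ≤ (max βm βp) * ∫ t in u..w, (deriv v t)^2 ∧
      IntervalIntegrable (fun t => (deriv v t)^2) volume u w ∧
      (∫ t in u..w, 1 / betaPW βm βp α t) ≤ (w - u) / min βm βp := by
  rcases hcase with ⟨βc, hβc, hle, hge, hside, q, hdeg, hq⟩ |
    ⟨huα, hαw, qm, qp, hdm, hdp, hqm, hqp, hjump⟩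
  · obtain ⟨h1, h2, h3, h4, h5, h6, h7, h8⟩ :=
      piece hu hβm hβp hβc hle hge hside hq (P := Polynomial.C βc * q.derivative) rfl
    refine ⟨Polynomial.C βc * q.derivative, ?_, fun t ht _ => h1 t ht, h2, ?_, h6, h7⟩
    · exact le_trans (Polynomial.natDegree_C_mul_le _ _)
        (le_trans (Polynomial.natDegree_derivative_le q) (by omega))
    · rw [h4]
      have hnn : 0 ≤ ∫ t in u..w, (deriv v t)^2 :=
        intervalIntegral.integral_nonneg hu.le (fun t _ => sq_nonneg _)
      exact mul_le_mul_of_nonneg_right hle hnn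
  · -- interface element
    have heq : Polynomial.C βm * qm.derivative = Polynomial.C βp * qp.derivative := by
      rw [← sub_eq_zero]
      apply poly_eq_zero_of_derivs (α := α) (M := p)
      · refine lt_of_le_of_lt (Polynomial.natDegree_sub_le _ _) ?_
        have b1 : (Polynomial.C βm * qm.derivative).natDegree ≤ p - 1 :=
          le_trans (Polynomial.natDegree_C_mul_le _ _)
            (le_trans (Polynomial.natDegree_derivative_le qm) (by omega))
        have b2 : (Polynomial.C βp * qp.derivative).natDegree ≤ p - 1 :=
          le_trans (Polynomial.natDegree_C_mul_le _ _)
            (le_trans (Polynomial.natDegree_derivative_le qp) (by omega))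
        exact lt_of_le_of_lt (max_le b1 b2) (by omega)
      · intro i hi
        have hit : ∀ (c : ℝ) (r : Polynomial ℝ),
            (⇑Polynomial.derivative)^[i] (Polynomial.C c * r.derivative)
              = Polynomial.C c * (⇑Polynomial.derivative)^[i+1] r := by
          intro c r
          rw [Polynomial.iterate_derivative_C_mul, Function.iterate_succ_apply]
        rw [Polynomial.iterate_derivative_sub, hit, hit, Polynomial.eval_sub,
          Polynomial.eval_mul, Polynomial.eval_mul, Polynomial.eval_C, Polynomial.eval_C,
          hjump (i+1) (by omega) (by omega), sub_self]
    have hsideL : ∀ t ∈ Set.Ioo u α, betaPW βm βp α t = βm := by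
      intro t ht; simp only [betaPW, if_pos ht.2]
    have hsideR : ∀ t ∈ Set.Ioo α w, betaPW βm βp α t = βp := by
      intro t ht; simp only [betaPW, if_neg (not_lt.mpr ht.1.le)]
    obtain ⟨L1, L2, L3, L4, L5, L6, L7, L8⟩ :=
      piece huα hβm hβp hβm (le_max_left _ _) (min_le_left _ _) hsideL hqm
        (P := Polynomial.C βm * qm.derivative) rfl
    obtain ⟨R1, R2, R3, R4, R5, R6, R7, R8⟩ :=
      piece hαw hβm hβp hβp (le_max_right _ _) (min_le_right _ _) hsideR hqp
        (P := Polynomial.C βm * qm.derivative) heq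
    set P := Polynomial.C βm * qm.derivative with hPdef
    have hdegP : P.natDegree ≤ p - 1 :=
      le_trans (Polynomial.natDegree_C_mul_le _ _)
        (le_trans (Polynomial.natDegree_derivative_le qm) (by omega))
    have hLnn : 0 ≤ ∫ t in u..α, (deriv v t)^2 :=
      intervalIntegral.integral_nonneg huα.le (fun t _ => sq_nonneg _)
    have hRnn : 0 ≤ ∫ t in α..w, (deriv v t)^2 :=
      intervalIntegral.integral_nonneg hαw.le (fun t _ => sq_nonneg _)
    refine ⟨P, hdegP, ?_, ?_, ?_, L6.trans R6, ?_⟩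
    · intro t ht htα
      rcases lt_or_gt_of_ne htα with h | h
      · exact L1 t ⟨ht.1, h⟩
      · exact R1 t ⟨h, ht.2⟩
    · rw [← intervalIntegral.integral_add_adjacent_intervals L3 R3, L2, R2]; ring
    · rw [← intervalIntegral.integral_add_adjacent_intervals L5 R5, L4, R4,
        ← intervalIntegral.integral_add_adjacent_intervals L6 R6]
      have := le_max_left βm βp
      have := le_max_right βm βp
      nlinarith [mul_le_mul_of_nonneg_right (le_max_left βm βp) hLnn,
        mul_le_mul_of_nonneg_right (le_max_right βm βp) hRnn]
    · calc ∫ t in u..w, 1 / betaPW βm βp α t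
          = (∫ t in u..α, 1 / betaPW βm βp α t) + ∫ t in α..w, 1 / betaPW βm βp α t := by
            rw [intervalIntegral.integral_add_adjacent_intervals L8 R8]
        _ ≤ (α - u) / min βm βp + (w - α) / min βm βp := add_le_add L7 R7
        _ = (w - u) / min βm βp := by ring

end Helpers

/-- there is a constant `C`, depending only on `p`, `β⁻`, `β⁺` and `b−a`, such
that for every `v` in the immersed trial space `U_T`, `‖Π_h v‖_{T'} ≤ C ‖v‖₁`. -/
theorem stmt_8 (p : ℕ) (hp : 1 ≤ p) (βm βp d : ℝ)
    (hβm : 0 < βm) (hβp : 0 < βp) (hd : 0 < d) :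
    ∃ C : ℝ, 0 < C ∧
    (∀ (N k : ℕ) (a b α : ℝ) (x : ℕ → ℝ) (g A : ℕ → ℕ → ℝ),
    b - a = d →
    1 ≤ N →
    1 ≤ k →
    k ≤ N →
    a < b →
    x 0 = a →
    x N = b →
    (∀ i, i < N → x i < x (i + 1)) →
    x (k - 1) < α →
    α < x k →
    (∀ i ∈ Finset.Icc 1 N, ∀ j ∈ Finset.Icc 1 p,
      x (i - 1) < g i j ∧ g i j < x i ∧ g i j ≠ α) →
    (∀ i ∈ Finset.Icc 1 N, ∀ j, 1 ≤ j → j < p → g i j < g i (j + 1)) →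
    (∀ i ∈ Finset.Icc 1 N, ∀ j ∈ Finset.Icc 1 p, 0 < A i j) →
    (∀ i ∈ Finset.Icc 1 N, ∀ F : Polynomial ℝ, F.natDegree ≤ 2 * p - 1 →
      ∑ j ∈ Finset.Icc 1 p, A i j * F.eval (g i j)
        = ∫ t in (x (i - 1))..(x i), F.eval t / betaPW βm βp α t) →
    ∀ v : ℝ → ℝ, MemUT p N k a b α βm βp x v →
    normTp N p x (pih N p βm βp α g A v)
      ≤ C * Real.sqrt (∫ t in a..b, ((deriv v t) ^ 2 + (v t) ^ 2))) := by
  classical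
  set βx := max βm βp with hβx
  set βn := min βm βp with hβn
  have hβxpos : 0 < βx := lt_max_iff.mpr (Or.inl hβm)
  have hβnpos : 0 < βn := lt_min hβm hβp
  set Csq := (βx/βn) * (1 + (p:ℝ) * d^2) with hCsq
  have hCsqpos : 0 < Csq :=
    mul_pos (div_pos hβxpos hβnpos) (by positivity)
  refine ⟨Real.sqrt Csq, Real.sqrt_pos.mpr hCsqpos, ?_⟩
  intro N k a b α x g A hba hN hk1 hkN hab hx0 hxN hxmono hαl hαr hg hgo hA hquad v hv
  obtain ⟨hvc, hva, hvb, hpoly, qm, qp, hqmdeg, hqpdeg, hvm, hvp, hjump⟩ := hv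
  -- monotonicity of the partition
  have hmono0 : ∀ j : ℕ, j ≤ N → ∀ i, i ≤ j → x i ≤ x j := by
    intro j
    induction j with
    | zero => intro _ i hi; rw [Nat.le_zero.mp hi]
    | succ n ih =>
      intro hn i hi
      rcases Nat.eq_or_lt_of_le hi with rfl | h
      · exact le_rfl
      · exact (ih (by omega) i (by omega)).trans (hxmono n (by omega)).le
  have hmono : ∀ i j : ℕ, i ≤ j → j ≤ N → x i ≤ x j := fun i j hij hjN => hmono0 j hjN i hij
  have hstep : ∀ m, 1 ≤ m → m ≤ N → x (m-1) < x m := by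
    intro m h1 h2
    have := hxmono (m-1) (by omega)
    have hm : m - 1 + 1 = m := by omega
    rwa [hm] at this
  -- element data
  have helem : ∀ m : ℕ, ∃ P : Polynomial ℝ, 1 ≤ m → m ≤ N →
      P.natDegree ≤ p - 1 ∧
      (∀ t ∈ Set.Ioo (x (m-1)) (x m), t ≠ α → betaPW βm βp α t * deriv v t = P.eval t) ∧
      (∫ t in (x (m-1))..(x m), P.eval t / betaPW βm βp α t) = v (x m) - v (x (m-1)) ∧
      (∫ t in (x (m-1))..(x m), (P.eval t)^2 / betaPW βm βp α t)
        ≤ βx * ∫ t in (x (m-1))..(x m), (deriv v t)^2 ∧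
      IntervalIntegrable (fun t => (deriv v t)^2) MeasureTheory.volume (x (m-1)) (x m) ∧
      (∫ t in (x (m-1))..(x m), 1 / betaPW βm βp α t) ≤ (x m - x (m-1)) / βn := by
    intro m
    by_cases hm : 1 ≤ m ∧ m ≤ N
    case neg => exact ⟨0, fun h1 h2 => absurd ⟨h1, h2⟩ hm⟩
    obtain ⟨hm1, hm2⟩ := hm
    have hu := hstep m hm1 hm2
    rcases eq_or_ne m k with rfl | hmk
    · obtain ⟨P, h⟩ := elem hp hβm hβp hu
        (Or.inr ⟨hαl, hαr, qm, qp, hqmdeg, hqpdeg, hvm, hvp, hjump⟩)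
      exact ⟨P, fun _ _ => h⟩
    · obtain ⟨q, hqd, hq⟩ := hpoly m hm1 hm2 hmk
      rcases Nat.lt_or_ge m k with hlt | hge
      · have hxb : x m ≤ x (k-1) := hmono m (k-1) (by omega) (by omega)
        have hside : ∀ t ∈ Set.Ioo (x (m-1)) (x m), betaPW βm βp α t = βm := by
          intro t ht
          have : t < α := lt_of_lt_of_le ht.2 (le_of_lt (lt_of_le_of_lt hxb hαl))
          simp [betaPW, this]
        obtain ⟨P, h⟩ := elem hp hβm hβp hu
          (Or.inl ⟨βm, hβm, le_max_left _ _, min_le_left _ _, hside, q, hqd, hq⟩)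
        exact ⟨P, fun _ _ => h⟩
      · have hmk' : k < m := by omega
        have hxb : x k ≤ x (m-1) := hmono k (m-1) (by omega) (by omega)
        have hside : ∀ t ∈ Set.Ioo (x (m-1)) (x m), betaPW βm βp α t = βp := by
          intro t ht
          have : ¬ t < α := not_lt.mpr (le_of_lt ((lt_of_lt_of_le hαr hxb).trans ht.1))
          simp [betaPW, this]
        obtain ⟨P, h⟩ := elem hp hβm hβp hu
          (Or.inl ⟨βp, hβp, le_max_right _ _, min_le_right _ _, hside, q, hqd, hq⟩)
        exact ⟨P, fun _ _ => h⟩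
  choose P hP using helem
  set W := pih N p βm βp α g A v with hWdef
  set E := ∫ t in a..b, ((deriv v t) ^ 2 + (v t) ^ 2) with hE
  set c : ℕ → ℕ → ℝ :=
    fun m n => A m n * (betaPW βm βp α (g m n) * deriv v (g m n)) with hc
  set Dm : ℕ → ℝ := fun m => ∫ t in (x (m-1))..(x m), (deriv v t)^2 with hDm
  set D := ∫ t in a..b, (deriv v t)^2 with hD
  -- node identities
  have hcval : ∀ m ∈ Finset.Icc 1 N, ∀ n ∈ Finset.Icc 1 p,
      c m n = A m n * (P m).eval (g m n) := by
    intro m hm n hn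
    have hm' := Finset.mem_Icc.mp hm
    obtain ⟨h1, h2, h3⟩ := hg m hm n hn
    show A m n * (betaPW βm βp α (g m n) * deriv v (g m n)) = _
    rw [(hP m hm'.1 hm'.2).2.1 (g m n) ⟨h1, h2⟩ h3]
  -- quadrature consequences
  have hsum1 : ∀ m ∈ Finset.Icc 1 N,
      ∑ n ∈ Finset.Icc 1 p, c m n = v (x m) - v (x (m-1)) := by
    intro m hm
    have hm' := Finset.mem_Icc.mp hm
    have hq := hquad m hm (P m) (le_trans (hP m hm'.1 hm'.2).1 (by omega))
    calc ∑ n ∈ Finset.Icc 1 p, c m n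
        = ∑ n ∈ Finset.Icc 1 p, A m n * (P m).eval (g m n) :=
          Finset.sum_congr rfl fun n hn => hcval m hm n hn
      _ = ∫ t in (x (m-1))..(x m), (P m).eval t / betaPW βm βp α t := hq
      _ = v (x m) - v (x (m-1)) := (hP m hm'.1 hm'.2).2.2.1
  have hsum2 : ∀ m ∈ Finset.Icc 1 N,
      ∑ n ∈ Finset.Icc 1 p, A m n * ((P m).eval (g m n))^2 ≤ βx * Dm m := by
    intro m hm
    have hm' := Finset.mem_Icc.mp hm
    have hq := hquad m hm ((P m) * (P m)) (by
      have h1 := (hP m hm'.1 hm'.2).1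
      calc ((P m)*(P m)).natDegree ≤ (P m).natDegree + (P m).natDegree :=
            Polynomial.natDegree_mul_le
        _ ≤ 2*p - 1 := by omega)
    calc ∑ n ∈ Finset.Icc 1 p, A m n * ((P m).eval (g m n))^2
        = ∑ n ∈ Finset.Icc 1 p, A m n * ((P m) * (P m)).eval (g m n) := by
          refine Finset.sum_congr rfl fun n hn => ?_
          rw [Polynomial.eval_mul]; ring
      _ = ∫ t in (x (m-1))..(x m), ((P m)*(P m)).eval t / betaPW βm βp α t := hq
      _ = ∫ t in (x (m-1))..(x m), ((P m).eval t)^2 / betaPW βm βp α t := by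
          refine intervalIntegral.integral_congr fun t _ => ?_
          rw [Polynomial.eval_mul]; ring
      _ ≤ βx * Dm m := (hP m hm'.1 hm'.2).2.2.2.1
  have hAsum : ∀ m ∈ Finset.Icc 1 N,
      ∑ n ∈ Finset.Icc 1 p, A m n ≤ (x m - x (m-1)) / βn := by
    intro m hm
    have hm' := Finset.mem_Icc.mp hm
    have hq := hquad m hm (Polynomial.C 1) (by simp)
    simp only [Polynomial.eval_C, mul_one] at hq
    rw [hq]
    exact (hP m hm'.1 hm'.2).2.2.2.2.2
  have hDm0 : ∀ m ∈ Finset.Icc 1 N, 0 ≤ Dm m := by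
    intro m hm
    have hm' := Finset.mem_Icc.mp hm
    exact intervalIntegral.integral_nonneg (hstep m hm'.1 hm'.2).le (fun t _ => sq_nonneg _)
  -- reindexing and telescoping
  have hreindex : ∀ f : ℕ → ℝ,
      ∑ m ∈ Finset.Icc 1 N, f m = ∑ i ∈ Finset.range N, f (i+1) := by
    intro f
    rw [← Finset.Ico_add_one_right_eq_Icc, Finset.sum_Ico_eq_sum_range]
    exact Finset.sum_congr rfl fun i _ => by rw [Nat.add_comm]
  have hsumh : ∑ m ∈ Finset.Icc 1 N, (x m - x (m-1)) = d := by
    rw [hreindex]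
    simp only [Nat.add_sub_cancel]
    rw [Finset.sum_range_sub (fun i => x i), hx0, hxN, hba]
  have hDsum : ∑ m ∈ Finset.Icc 1 N, Dm m = D := by
    rw [hreindex]
    simp only [hDm, Nat.add_sub_cancel]
    rw [intervalIntegral.sum_integral_adjacent_intervals (a := fun i => x i) (n := N)
      (fun i hi => by simpa using (hP (i+1) (by omega) (by omega)).2.2.2.2.1)]
    rw [hx0, hxN]
  have hStot : ∑ m ∈ Finset.Icc 1 N, ∑ n ∈ Finset.Icc 1 p, c m n = 0 := by
    rw [Finset.sum_congr rfl hsum1, hreindex]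
    simp only [Nat.add_sub_cancel]
    rw [Finset.sum_range_sub (fun i => v (x i)), hx0, hxN, hva, hvb, sub_zero]
  have hD0 : 0 ≤ D := by
    rw [← hDsum]; exact Finset.sum_nonneg hDm0
  have hDE : D ≤ E := by
    have hDint : IntervalIntegrable (fun t => (deriv v t)^2) MeasureTheory.volume a b := by
      have hchain : ∀ n, n ≤ N →
          IntervalIntegrable (fun t => (deriv v t)^2) MeasureTheory.volume (x 0) (x n) := by
        intro n
        induction n with
        | zero => intro _; exact IntervalIntegrable.refl
        | succ n ih =>
          intro h
          exact (ih (by omega)).trans (by simpa using (hP (n+1) (by omega) (by omega)).2.2.2.2.1)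
      have := hchain N le_rfl
      rwa [hx0, hxN] at this
    have hv2int : IntervalIntegrable (fun t => (v t)^2) MeasureTheory.volume a b := by
      apply ContinuousOn.intervalIntegrable
      rw [Set.uIcc_of_le hab.le]
      exact hvc.pow 2
    have h1 : E = D + ∫ t in a..b, (v t)^2 := by
      rw [hE, hD, ← intervalIntegral.integral_add hDint hv2int]
    have h2 : 0 ≤ ∫ t in a..b, (v t)^2 :=
      intervalIntegral.integral_nonneg hab.le (fun t _ => sq_nonneg _)
    linarith
  have hE0 : 0 ≤ E := hD0.trans hDE
  -- Cauchy–Schwarz bound on the total absolute sum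
  set L := ∑ m ∈ Finset.Icc 1 N, ∑ n ∈ Finset.Icc 1 p, A m n * |(P m).eval (g m n)|
    with hL
  have hL0 : 0 ≤ L :=
    Finset.sum_nonneg fun m hm => Finset.sum_nonneg fun n hn =>
      mul_nonneg (hA m hm n hn).le (abs_nonneg _)
  have hT1 : ∑ m ∈ Finset.Icc 1 N, ∑ n ∈ Finset.Icc 1 p, A m n ≤ d / βn :=
    calc ∑ m ∈ Finset.Icc 1 N, ∑ n ∈ Finset.Icc 1 p, A m n
        ≤ ∑ m ∈ Finset.Icc 1 N, (x m - x (m-1)) / βn := Finset.sum_le_sum hAsum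
      _ = (∑ m ∈ Finset.Icc 1 N, (x m - x (m-1))) / βn := by rw [Finset.sum_div]
      _ = d / βn := by rw [hsumh]
  have hT2 : ∑ m ∈ Finset.Icc 1 N, ∑ n ∈ Finset.Icc 1 p, A m n * ((P m).eval (g m n))^2
      ≤ βx * D :=
    calc ∑ m ∈ Finset.Icc 1 N, ∑ n ∈ Finset.Icc 1 p, A m n * ((P m).eval (g m n))^2
        ≤ ∑ m ∈ Finset.Icc 1 N, βx * Dm m := Finset.sum_le_sum hsum2
      _ = βx * ∑ m ∈ Finset.Icc 1 N, Dm m := by rw [Finset.mul_sum]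
      _ = βx * D := by rw [hDsum]
  have hT2' : 0 ≤ ∑ m ∈ Finset.Icc 1 N, ∑ n ∈ Finset.Icc 1 p, A m n * ((P m).eval (g m n))^2 :=
    Finset.sum_nonneg fun m hm => Finset.sum_nonneg fun n hn =>
      mul_nonneg (hA m hm n hn).le (sq_nonneg _)
  have hL2 : L^2 ≤ (d/βn) * (βx * D) := by
    have hCS := Finset.sum_mul_sq_le_sq_mul_sq (Finset.Icc 1 N ×ˢ Finset.Icc 1 p)
      (fun q => Real.sqrt (A q.1 q.2))
      (fun q => Real.sqrt (A q.1 q.2) * |(P q.1).eval (g q.1 q.2)|)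
    have e1 : ∑ q ∈ Finset.Icc 1 N ×ˢ Finset.Icc 1 p,
        Real.sqrt (A q.1 q.2) * (Real.sqrt (A q.1 q.2) * |(P q.1).eval (g q.1 q.2)|) = L := by
      rw [hL, Finset.sum_product]
      refine Finset.sum_congr rfl fun m hm => Finset.sum_congr rfl fun n hn => ?_
      rw [← mul_assoc, Real.mul_self_sqrt (hA m hm n hn).le]
    have e2 : ∑ q ∈ Finset.Icc 1 N ×ˢ Finset.Icc 1 p, (Real.sqrt (A q.1 q.2))^2
        = ∑ m ∈ Finset.Icc 1 N, ∑ n ∈ Finset.Icc 1 p, A m n := by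
      rw [Finset.sum_product]
      exact Finset.sum_congr rfl fun m hm => Finset.sum_congr rfl fun n hn =>
        Real.sq_sqrt (hA m hm n hn).le
    have e3 : ∑ q ∈ Finset.Icc 1 N ×ˢ Finset.Icc 1 p,
        (Real.sqrt (A q.1 q.2) * |(P q.1).eval (g q.1 q.2)|)^2
        = ∑ m ∈ Finset.Icc 1 N, ∑ n ∈ Finset.Icc 1 p, A m n * ((P m).eval (g m n))^2 := by
      rw [Finset.sum_product]
      refine Finset.sum_congr rfl fun m hm => Finset.sum_congr rfl fun n hn => ?_
      rw [mul_pow, Real.sq_sqrt (hA m hm n hn).le, sq_abs]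
    rw [e1, e2, e3] at hCS
    calc L^2 ≤ (∑ m ∈ Finset.Icc 1 N, ∑ n ∈ Finset.Icc 1 p, A m n)
          * (∑ m ∈ Finset.Icc 1 N, ∑ n ∈ Finset.Icc 1 p, A m n * ((P m).eval (g m n))^2) := hCS
      _ ≤ (d/βn) * (βx * D) := by
          exact mul_le_mul hT1 hT2 hT2' (div_nonneg hd.le hβnpos.le)
  -- prefix-sum formula for W
  have hsplitIcc : ∀ (f : ℕ → ℝ) (i : ℕ), 1 ≤ i →
      ∑ m ∈ Finset.Icc 1 i, f m = (∑ m ∈ Finset.Icc 1 (i-1), f m) + f i := by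
    intro f i hi
    obtain ⟨j, rfl⟩ : ∃ j, i = j + 1 := ⟨i-1, by omega⟩
    rw [Finset.sum_Icc_succ_top (by omega)]
    simp
  have hWeq : ∀ i j, i ≤ N → W i j =
      (∑ m ∈ Finset.Icc 1 (i-1), ∑ n ∈ Finset.Icc 1 p, c m n)
        + ∑ n ∈ Finset.Icc 1 j, c i n := by
    intro i j hiN
    rw [hWdef]
    unfold pih
    by_cases hij : i = N ∧ j = p
    · rw [if_pos hij]
      obtain ⟨rfl, rfl⟩ := hij
      have hsplit := hsplitIcc (fun m => ∑ n ∈ Finset.Icc 1 j, c m n) i hN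
      rw [← hsplit]
      exact hStot.symm
    · rw [if_neg hij]
  -- jumps are the individual quadrature terms
  have hjmp : ∀ i ∈ Finset.Icc 1 N, ∀ j ∈ Finset.Icc 1 p, jmp p W i j = c i j := by
    intro i hi j hj
    obtain ⟨hi1, hiN⟩ := Finset.mem_Icc.mp hi
    obtain ⟨hj1, hjp⟩ := Finset.mem_Icc.mp hj
    unfold jmp vprev
    by_cases hj1' : j = 1
    · subst hj1'
      by_cases hi1' : i = 1
      · subst hi1'
        rw [if_pos rfl, if_pos rfl, hWeq 1 1 hN]
        simp [Finset.Icc_self]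
      · rw [if_pos rfl, if_neg hi1', hWeq i 1 hiN, hWeq (i-1) p (by omega),
          hsplitIcc (fun m => ∑ n ∈ Finset.Icc 1 p, c m n) (i-1) (by omega)]
        simp only [Finset.Icc_self, Finset.sum_singleton]
        ring
    · rw [if_neg hj1', hWeq i j hiN, hWeq i (j-1) hiN,
        hsplitIcc (fun n => c i n) j (by omega)]
      ring
  -- first-seminorm bound
  have hS1 : ∑ i ∈ Finset.Icc 1 N, ∑ j ∈ Finset.Icc 1 p,
      (x i - x (i - 1))⁻¹ * (jmp p W i j) ^ 2 ≤ (βx/βn) * D := by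
    calc ∑ i ∈ Finset.Icc 1 N, ∑ j ∈ Finset.Icc 1 p,
          (x i - x (i - 1))⁻¹ * (jmp p W i j) ^ 2
        ≤ ∑ i ∈ Finset.Icc 1 N, ∑ j ∈ Finset.Icc 1 p,
          (1/βn) * (A i j * ((P i).eval (g i j))^2) := by
          refine Finset.sum_le_sum fun i hi => Finset.sum_le_sum fun j hj => ?_
          rw [hjmp i hi j hj, hcval i hi j hj]
          have hi' := Finset.mem_Icc.mp hi
          have hh := hstep i hi'.1 hi'.2
          have hApos' := hA i hi j hj
          have hAle : A i j ≤ (x i - x (i-1)) / βn :=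
            le_trans (Finset.single_le_sum (fun n hn => (hA i hi n hn).le) hj) (hAsum i hi)
          have h1 : (x i - x (i-1))⁻¹ * A i j ≤ 1/βn := by
            rw [inv_mul_le_iff₀ (by linarith)]
            have : (x i - x (i-1)) * (1/βn) = (x i - x (i-1)) / βn := by ring
            rw [this]
            exact hAle
          calc (x i - x (i-1))⁻¹ * (A i j * (P i).eval (g i j))^2
              = ((x i - x (i-1))⁻¹ * A i j) * (A i j * ((P i).eval (g i j))^2) := by ring
            _ ≤ (1/βn) * (A i j * ((P i).eval (g i j))^2) :=
                mul_le_mul_of_nonneg_right h1 (mul_nonneg hApos'.le (sq_nonneg _))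
      _ = (1/βn) * ∑ i ∈ Finset.Icc 1 N, ∑ j ∈ Finset.Icc 1 p,
            A i j * ((P i).eval (g i j))^2 := by
          rw [Finset.mul_sum]
          exact Finset.sum_congr rfl fun i _ => by rw [Finset.mul_sum]
      _ ≤ (1/βn) * (βx * D) :=
          mul_le_mul_of_nonneg_left hT2 (by positivity)
      _ = (βx/βn) * D := by ring
  -- entry bound
  have hWb : ∀ i ∈ Finset.Icc 1 N, ∀ j, j ≤ p → |W i j| ≤ L := by
    intro i hi j hjp
    obtain ⟨hi1, hiN⟩ := Finset.mem_Icc.mp hi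
    rw [hWeq i j hiN]
    have hLeq : ∑ m ∈ Finset.Icc 1 N, ∑ n ∈ Finset.Icc 1 p, |c m n| = L := by
      rw [hL]
      refine Finset.sum_congr rfl fun m hm => Finset.sum_congr rfl fun n hn => ?_
      rw [hcval m hm n hn, abs_mul, abs_of_pos (hA m hm n hn)]
    have A1 : |∑ m ∈ Finset.Icc 1 (i-1), ∑ n ∈ Finset.Icc 1 p, c m n|
        ≤ ∑ m ∈ Finset.Icc 1 (i-1), ∑ n ∈ Finset.Icc 1 p, |c m n| :=
      le_trans (Finset.abs_sum_le_sum_abs _ _)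
        (Finset.sum_le_sum fun m _ => Finset.abs_sum_le_sum_abs _ _)
    have A2 : |∑ n ∈ Finset.Icc 1 j, c i n| ≤ ∑ n ∈ Finset.Icc 1 j, |c i n| :=
      Finset.abs_sum_le_sum_abs _ _
    have e1 : Finset.Icc 1 (i-1) = Finset.Ico 1 i := by
      rw [← Finset.Ico_add_one_right_eq_Icc]
      congr 1
      omega
    have e2 : Finset.Icc i N = Finset.Ico i (N+1) := (Finset.Ico_add_one_right_eq_Icc i N).symm
    have e3 : Finset.Icc 1 N = Finset.Ico 1 (N+1) := (Finset.Ico_add_one_right_eq_Icc 1 N).symm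
    have hsplit2 : (∑ m ∈ Finset.Icc 1 (i-1), ∑ n ∈ Finset.Icc 1 p, |c m n|)
          + ∑ m ∈ Finset.Icc i N, ∑ n ∈ Finset.Icc 1 p, |c m n|
        = ∑ m ∈ Finset.Icc 1 N, ∑ n ∈ Finset.Icc 1 p, |c m n| := by
      rw [e1, e2, e3]
      exact Finset.sum_Ico_consecutive _ (by omega) (by omega)
    have h3 : ∑ n ∈ Finset.Icc 1 j, |c i n|
        ≤ ∑ m ∈ Finset.Icc i N, ∑ n ∈ Finset.Icc 1 p, |c m n| := by
      refine le_trans (Finset.sum_le_sum_of_subset_of_nonneg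
        (Finset.Icc_subset_Icc_right hjp) (fun n _ _ => abs_nonneg _)) ?_
      exact Finset.single_le_sum
        (f := fun m => ∑ n ∈ Finset.Icc 1 p, |c m n|)
        (fun m _ => Finset.sum_nonneg fun n _ => abs_nonneg _)
        (Finset.mem_Icc.mpr ⟨le_rfl, hiN⟩)
    calc |(∑ m ∈ Finset.Icc 1 (i-1), ∑ n ∈ Finset.Icc 1 p, c m n)
          + ∑ n ∈ Finset.Icc 1 j, c i n|
        ≤ |∑ m ∈ Finset.Icc 1 (i-1), ∑ n ∈ Finset.Icc 1 p, c m n|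
          + |∑ n ∈ Finset.Icc 1 j, c i n| := abs_add_le _ _
      _ ≤ ∑ m ∈ Finset.Icc 1 N, ∑ n ∈ Finset.Icc 1 p, |c m n| := by
          rw [← hsplit2]
          have := le_trans A2 h3
          linarith
      _ = L := hLeq
  -- zero-norm bound
  have hS0 : ∑ i ∈ Finset.Icc 1 N, ∑ j ∈ Finset.Icc 1 (if i < N then p else p - 1),
      (x i - x (i - 1)) * (W i j) ^ 2 ≤ (βx/βn) * ((p:ℝ) * d^2) * D := by
    calc ∑ i ∈ Finset.Icc 1 N, ∑ j ∈ Finset.Icc 1 (if i < N then p else p - 1),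
          (x i - x (i - 1)) * (W i j) ^ 2
        ≤ ∑ i ∈ Finset.Icc 1 N, (p:ℝ) * ((x i - x (i-1)) * L^2) := by
          refine Finset.sum_le_sum fun i hi => ?_
          have hi' := Finset.mem_Icc.mp hi
          have hh := hstep i hi'.1 hi'.2
          have hhpos : (0:ℝ) ≤ x i - x (i-1) := by linarith
          have step1 : ∑ j ∈ Finset.Icc 1 (if i < N then p else p - 1),
              (x i - x (i - 1)) * (W i j) ^ 2
              ≤ ∑ j ∈ Finset.Icc 1 (if i < N then p else p - 1),
                (x i - x (i-1)) * L^2 := by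
            refine Finset.sum_le_sum fun j hj => ?_
            have hjp : j ≤ p := by
              have h4 := (Finset.mem_Icc.mp hj).2
              split_ifs at h4 <;> omega
            have hWsq : (W i j)^2 ≤ L^2 := by
              rw [← sq_abs (W i j)]
              exact pow_le_pow_left₀ (abs_nonneg _) (hWb i hi j hjp) 2
            exact mul_le_mul_of_nonneg_left hWsq hhpos
          refine le_trans step1 ?_
          rw [Finset.sum_const, nsmul_eq_mul]
          have hcard : ((Finset.Icc 1 (if i < N then p else p - 1)).card : ℝ) ≤ (p:ℝ) := by
            have : (Finset.Icc 1 (if i < N then p else p - 1)).card ≤ p := by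
              rw [Nat.card_Icc]
              split_ifs <;> omega
            exact_mod_cast this
          exact mul_le_mul_of_nonneg_right hcard (mul_nonneg hhpos (sq_nonneg L))
      _ = (p:ℝ) * L^2 * ∑ i ∈ Finset.Icc 1 N, (x i - x (i-1)) := by
          rw [Finset.mul_sum]
          exact Finset.sum_congr rfl fun i _ => by ring
      _ = (p:ℝ) * L^2 * d := by rw [hsumh]
      _ ≤ (p:ℝ) * ((d/βn) * (βx * D)) * d := by
          have h1 : (p:ℝ) * L^2 ≤ (p:ℝ) * ((d/βn)*(βx*D)) :=
            mul_le_mul_of_nonneg_left hL2 (by positivity)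
          exact mul_le_mul_of_nonneg_right h1 hd.le
      _ = (βx/βn) * ((p:ℝ) * d^2) * D := by ring
  -- assemble
  have htot : normTpSq N p x W ≤ Csq * E := by
    unfold normTpSq
    calc (∑ i ∈ Finset.Icc 1 N, ∑ j ∈ Finset.Icc 1 p,
            (x i - x (i - 1))⁻¹ * (jmp p W i j) ^ 2)
          + ∑ i ∈ Finset.Icc 1 N, ∑ j ∈ Finset.Icc 1 (if i < N then p else p - 1),
            (x i - x (i - 1)) * (W i j) ^ 2
        ≤ (βx/βn) * D + (βx/βn) * ((p:ℝ) * d^2) * D := add_le_add hS1 hS0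
      _ = Csq * D := by rw [hCsq]; ring
      _ ≤ Csq * E := mul_le_mul_of_nonneg_left hDE hCsqpos.le
  show Real.sqrt (normTpSq N p x W) ≤ Real.sqrt Csq * Real.sqrt E
  calc Real.sqrt (normTpSq N p x W) ≤ Real.sqrt (Csq * E) := Real.sqrt_le_sqrt htot
    _ = Real.sqrt Csq * Real.sqrt E := Real.sqrt_mul hCsqpos.le E
end
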